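/- arXiv:1808.02538 — 12 statements merged into one kernel-verified Lean document; each statement's English description precedes it below -/
import Mathlib

section
/- Fix constants K_dB ∈ ℝ, n_PL > 0, d_src > 0, θ_src ∈ (0,π), σ_SH > 0, β_SH > 0, and define the path-loss function γ_PL(d) = K_dB − 5·n_PL·log₁₀(d_src² + d² − 2·d_src·d·cos θ_src) for d ≥ 0 (the argument of the logarithm is strictly positive since θ_src ∈ (0,π)). For l ≥ 0 and η ∈ ℝ, define the transition density f(γ, d | η, l) for d > l as the Gaussian probability density in γ with mean μ(d) = γ_PL(d) + e^{−(d−l)/β_SH}(η − γ_PL(l)) and variance v(d) = σ_SH²(1 − e^{−2(d−l)/β_SH}). Then for all d > l and all γ ∈ ℝ, f satisfies the forward Fokker–Planck partial differential equation ∂f/∂d (γ,d|η,l) = −∂/∂γ [A(γ,d)·f(γ,d|η,l)] + (1/2)·B·∂²f/∂γ² (γ,d|η,l), where A(γ,d) = γ_PL′(d) − (γ − γ_PL(d))/β_SH, B = 2σ_SH²/β_SH, and γ_PL′(d) = −10·n_PL·log₁₀(e)·(d − d_src cos θ_src)/(d_src² + d² − 2 d_src d cos θ_src). -/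
open Real

set_option maxHeartbeats 2000000 in
/-- The Gaussian transition density of the path-loss-plus-shadowing channel
power process satisfies the forward Fokker–Planck equation. -/
theorem stmt_2 (KdB nPL dsrc θsrc σSH βSH l η : ℝ)
    (hnPL : 0 < nPL) (hdsrc : 0 < dsrc) (hθ : θsrc ∈ Set.Ioo 0 π)
    (hσ : 0 < σSH) (hβ : 0 < βSH) (hl : 0 ≤ l)
    -- the path-loss function `γ_PL(d) = K_dB − 5 n_PL log₁₀(d_src² + d² − 2 d_src d cos θ_src)`
    (γPL : ℝ → ℝ)
    (hγPL : ∀ d, γPL d = KdB - 5 * nPL *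
      (Real.log (dsrc ^ 2 + d ^ 2 - 2 * dsrc * d * Real.cos θsrc) / Real.log 10))
    -- its derivative (`log₁₀ e = 1 / log 10`)
    (γPL' : ℝ → ℝ)
    (hγPL' : ∀ d, γPL' d = -10 * nPL * (1 / Real.log 10) *
      ((d - dsrc * Real.cos θsrc) / (dsrc ^ 2 + d ^ 2 - 2 * dsrc * d * Real.cos θsrc)))
    -- mean and variance of the transition density
    (μ v : ℝ → ℝ)
    (hμ : ∀ d, μ d = γPL d + Real.exp (-(d - l) / βSH) * (η - γPL l))
    (hv : ∀ d, v d = σSH ^ 2 * (1 - Real.exp (-2 * (d - l) / βSH)))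
    -- the transition density `f(γ, d | η, l)` as a Gaussian density in `γ`
    (f : ℝ → ℝ → ℝ)
    (hf : ∀ γ d, f γ d =
      (Real.sqrt (2 * π * v d))⁻¹ * Real.exp (-(γ - μ d) ^ 2 / (2 * v d)))
    -- drift and diffusion coefficients
    (A : ℝ → ℝ → ℝ) (hA : ∀ γ d, A γ d = γPL' d - (γ - γPL d) / βSH)
    (Bc : ℝ) (hBc : Bc = 2 * σSH ^ 2 / βSH) :
    ∀ d, l < d → ∀ γ : ℝ,
      deriv (fun d' => f γ d') d =
        -deriv (fun γ' => A γ' d * f γ' d) γ +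
          (1 / 2) * Bc * deriv (deriv fun γ' => f γ' d) γ := by
  intro d hd γ
  have hπ := Real.pi_pos
  have hsin := Real.sin_pos_of_pos_of_lt_pi hθ.1 hθ.2
  have hQpos : ∀ x : ℝ, 0 < dsrc ^ 2 + x ^ 2 - 2 * dsrc * x * Real.cos θsrc := by
    intro x
    nlinarith [sq_nonneg (x - dsrc * Real.cos θsrc), Real.sin_sq_add_cos_sq θsrc,
      mul_pos (mul_pos hdsrc hdsrc) (mul_pos hsin hsin)]
  have hlog10 : Real.log 10 ≠ 0 := ne_of_gt (Real.log_pos (by norm_num))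
  set E : ℝ := Real.exp (-(d - l) / βSH) with hEdef
  have hEpos : 0 < E := Real.exp_pos _
  have hE1 : E < 1 := Real.exp_lt_one_iff.mpr (by
    apply div_neg_of_neg_of_pos _ hβ; linarith)
  have hE2 : Real.exp (-2 * (d - l) / βSH) = E ^ 2 := by
    rw [hEdef, sq, ← Real.exp_add]; ring_nf
  have hvd : v d = σSH ^ 2 * (1 - E ^ 2) := by rw [hv, hE2]
  have hvpos : 0 < v d := by
    rw [hvd]; have : 0 < 1 - E ^ 2 := by nlinarith
    exact mul_pos (pow_pos hσ 2) this
  have hvne : v d ≠ 0 := ne_of_gt hvpos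
  have hβne : βSH ≠ 0 := ne_of_gt hβ
  -- derivative of γPL
  have hγPLderiv : ∀ x : ℝ, HasDerivAt γPL (γPL' x) x := by
    intro x
    have hQ : HasDerivAt (fun y : ℝ => dsrc ^ 2 + y ^ 2 - 2 * dsrc * y * Real.cos θsrc)
        (2 * x - 2 * dsrc * Real.cos θsrc) x := by
      have h1 : HasDerivAt (fun y : ℝ => dsrc ^ 2 + y ^ 2) (2 * x) x := by
        simpa using (hasDerivAt_pow 2 x).const_add (dsrc ^ 2)
      have h2 : HasDerivAt (fun y : ℝ => 2 * dsrc * y * Real.cos θsrc)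
          (2 * dsrc * Real.cos θsrc) x := by
        simpa using ((hasDerivAt_id x).const_mul (2 * dsrc)).mul_const (Real.cos θsrc)
      exact h1.sub h2
    have h3 := ((hQ.log (ne_of_gt (hQpos x))).div_const (Real.log 10)).const_mul (5 * nPL)
    have h4 := h3.const_sub KdB
    have hfun : γPL = fun y => KdB - 5 * nPL *
        (Real.log (dsrc ^ 2 + y ^ 2 - 2 * dsrc * y * Real.cos θsrc) / Real.log 10) :=
      funext hγPL
    rw [hfun, hγPL']
    refine h4.congr_deriv ?_
    field_simp
    ring
  -- derivative of the exponential term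
  have hinner : HasDerivAt (fun x : ℝ => -(x - l) / βSH) (-1 / βSH) d := by
    simpa using (((hasDerivAt_id d).sub_const l).neg).div_const βSH
  have hEderiv : HasDerivAt (fun x : ℝ => Real.exp (-(x - l) / βSH)) (E * (-1 / βSH)) d := by
    simpa [hEdef, mul_comm] using hinner.exp
  -- derivative of μ
  set μ' : ℝ := γPL' d + E * (-1 / βSH) * (η - γPL l) with hμ'def
  have hμderiv : HasDerivAt μ μ' d := by
    have h := (hγPLderiv d).add (hEderiv.mul_const (η - γPL l))
    have hfun : μ = fun x => γPL x + Real.exp (-(x - l) / βSH) * (η - γPL l) := funext hμ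
    rw [hfun]; exact h
  -- derivative of v
  set v' : ℝ := σSH ^ 2 * (2 / βSH) * E ^ 2 with hv'def
  have hvderiv : HasDerivAt v v' d := by
    have hi : HasDerivAt (fun x : ℝ => -2 * (x - l) / βSH) (-2 / βSH) d := by
      simpa using (((hasDerivAt_id d).sub_const l).const_mul (-2)).div_const βSH
    have h := ((hi.exp).const_sub 1).const_mul (σSH ^ 2)
    have hfun : v = fun x => σSH ^ 2 * (1 - Real.exp (-2 * (x - l) / βSH)) := funext hv
    rw [hfun]
    refine h.congr_deriv ?_
    rw [hE2]; ring
  -- the normalizing constant and its derivative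
  set c : ℝ := (Real.sqrt (2 * π * v d))⁻¹ with hcdef
  have h2πv : 0 < 2 * π * v d := by positivity
  have hsqpos : 0 < Real.sqrt (2 * π * v d) := Real.sqrt_pos.mpr h2πv
  have hsqne : Real.sqrt (2 * π * v d) ≠ 0 := ne_of_gt hsqpos
  have hs2 : Real.sqrt (2 * π * v d) ^ 2 = 2 * π * v d := Real.sq_sqrt (le_of_lt h2πv)
  have hcderiv : HasDerivAt (fun x => (Real.sqrt (2 * π * v x))⁻¹)
      (-(v' / (2 * v d)) * c) d := by
    have h := ((hvderiv.const_mul (2 * π)).sqrt (ne_of_gt h2πv)).inv hsqne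
    refine h.congr_deriv ?_
    rw [hcdef, hs2]
    field_simp
  -- derivative of the exponent in d
  set X : ℝ := -(γ - μ d) ^ 2 / (2 * v d) with hXdef
  have hexpd : HasDerivAt (fun x => Real.exp (-(γ - μ x) ^ 2 / (2 * v x)))
      (Real.exp X * ((2 * (γ - μ d) * μ' * (2 * v d) - (-(γ - μ d) ^ 2) * (2 * v')) / (2 * v d) ^ 2)) d := by
    have hnum : HasDerivAt (fun x => -(γ - μ x) ^ 2) (2 * (γ - μ d) * μ') d := by
      have h := ((hμderiv.const_sub γ).pow 2).neg
      refine h.congr_deriv ?_; ring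
    have hden : HasDerivAt (fun x => 2 * v x) (2 * v') d := hvderiv.const_mul 2
    have h := (hnum.div hden (by positivity)).exp
    simpa [hXdef] using h
  -- full d-derivative of f
  have hfd : HasDerivAt (fun d' => f γ d')
      (-(v' / (2 * v d)) * c * Real.exp X
        + c * (Real.exp X * ((2 * (γ - μ d) * μ' * (2 * v d) - (-(γ - μ d) ^ 2) * (2 * v')) / (2 * v d) ^ 2))) d := by
    have hfun : (fun d' => f γ d') = fun d' =>
        (Real.sqrt (2 * π * v d'))⁻¹ * Real.exp (-(γ - μ d') ^ 2 / (2 * v d')) :=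
      funext fun d' => hf γ d'
    rw [hfun]
    exact hcderiv.mul hexpd
  -- γ-derivative of f (first)
  have hfγ : ∀ γ' : ℝ, HasDerivAt (fun γ'' => f γ'' d) (-(γ' - μ d) / v d * f γ' d) γ' := by
    intro γ'
    have hfun : (fun γ'' => f γ'' d) = fun γ'' =>
        c * Real.exp (-(γ'' - μ d) ^ 2 / (2 * v d)) := by
      funext γ''; rw [hf, hcdef]
    rw [hfun]
    have h := ((((hasDerivAt_id γ').sub_const (μ d)).pow 2).neg.div_const (2 * v d)).exp.const_mul c
    simp only [Pi.neg_apply, Pi.pow_apply, id, Nat.cast_ofNat] at h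
    refine h.congr_deriv ?_
    rw [hf, hcdef]
    field_simp
    ring
  have hderiv1 : (deriv fun γ' => f γ' d) = fun γ' => -(γ' - μ d) / v d * f γ' d :=
    funext fun γ' => (hfγ γ').deriv
  -- second γ-derivative
  have hfγ2 : HasDerivAt (fun γ' => -(γ' - μ d) / v d * f γ' d)
      (-1 / v d * f γ d + -(γ - μ d) / v d * (-(γ - μ d) / v d * f γ d)) γ := by
    have h1 : HasDerivAt (fun γ' : ℝ => -(γ' - μ d) / v d) (-1 / v d) γ := by
      simpa using (((hasDerivAt_id γ).sub_const (μ d)).neg).div_const (v d)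
    exact h1.mul (hfγ γ)
  -- derivative of A·f
  have hAd : HasDerivAt (fun γ' => A γ' d) (-(1 / βSH)) γ := by
    have hfun : (fun γ' => A γ' d) = fun γ' => γPL' d - (γ' - γPL d) / βSH :=
      funext fun γ' => hA γ' d
    rw [hfun]
    simpa using (((hasDerivAt_id γ).sub_const (γPL d)).div_const βSH).const_sub (γPL' d)
  have hAf : HasDerivAt (fun γ' => A γ' d * f γ' d)
      (-(1 / βSH) * f γ d + A γ d * (-(γ - μ d) / v d * f γ d)) γ := hAd.mul (hfγ γ)
  -- assemble
  rw [hfd.deriv, hderiv1, hAf.deriv, hfγ2.deriv]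
  have hrelγPL : γPL d = μ d - E * (η - γPL l) := by rw [hμ d]; ring
  rw [hf γ d, ← hcdef, ← hXdef, hA, hBc, hμ'def, hv'def, hvd, hrelγPL]
  have h1mE : (1 : ℝ) - E ^ 2 ≠ 0 := by nlinarith
  field_simp
  ring
end

section
/- Let r : ℝ → ℝ² be a twice continuously differentiable planar curve parameterized by arc length, i.e., ‖r′(s)‖ = 1 for all s, and suppose its curvature is bounded by κ > 0, i.e., ‖r″(s)‖ ≤ κ for all s. Then for every s ∈ [0, π/κ], the chord length satisfies ‖r(s) − r(0)‖ ≥ (2/κ)·sin(κ s / 2). -/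
open Real

open RealInnerProductSpace in

lemma inner_bound {E : Type*} [NormedAddCommGroup E] [InnerProductSpace ℝ E]
    (a c w : E) (hc : ‖c‖ = 1) (hw : ‖w‖ = 1) (hac : ⟪a, c⟫ = 0) :
    |⟪a, w⟫| ≤ ‖a‖ * Real.sqrt (1 - ⟪c, w⟫^2) := by
  set g : ℝ := ⟪c, w⟫ with hg
  have h1 : ⟪a, w⟫ = ⟪a, w - g • c⟫ := by
    rw [inner_sub_right, inner_smul_right, hac]; ring
  have h2 : ‖w - g • c‖^2 = 1 - g^2 := by
    rw [← real_inner_self_eq_norm_sq]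
    simp only [inner_sub_sub_self, inner_smul_right, inner_smul_left, real_inner_smul_left,
      RCLike.star_def, starRingEnd_apply, star_trivial]
    have hwc : (inner ℝ w c : ℝ) = g := by rw [hg]; exact real_inner_comm c w
    rw [real_inner_self_eq_norm_sq, real_inner_self_eq_norm_sq, hw, hc, hwc]
    ring
  have h3 : ‖w - g • c‖ = Real.sqrt (1 - g^2) := by
    rw [← h2]; exact (Real.sqrt_sq (norm_nonneg _)).symm
  rw [h1, ← h3]
  exact abs_real_inner_le_norm _ _


lemma comp_lemma (κ : ℝ) (hκ : 0 < κ) (g : ℝ → ℝ)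
    (hg : Differentiable ℝ g) (hg0 : g 0 = 1)
    (hb : ∀ u, |g u| ≤ 1)
    (hd : ∀ u, |deriv g u| ≤ κ * Real.sqrt (1 - (g u)^2)) :
    ∀ u ∈ Set.Icc (0:ℝ) (π/(2*κ)), Real.cos (κ * u) ≤ g u := by
  have hlip : ∀ u, |deriv g u| ≤ κ := by
    intro u
    refine (hd u).trans ?_
    have h1 : Real.sqrt (1 - (g u)^2) ≤ 1 := by
      refine Real.sqrt_le_one.mpr ?_
      nlinarith [hb u, abs_nonneg (g u), sq_abs (g u)]
    nlinarith
  have hgt : ∀ u ∈ Set.Icc (0:ℝ) (π/(2*κ)), -1 < g u := by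
    intro u hu
    have h1 : ∀ x ∈ Set.Icc (0:ℝ) u, HasDerivWithinAt g (deriv g x) (Set.Icc 0 u) x :=
      fun x _ => (hg x).hasDerivAt.hasDerivWithinAt
    have h2 := norm_image_sub_le_of_norm_deriv_le_segment' h1
      (fun x _ => hlip x) u (Set.mem_Icc.mpr ⟨hu.1, le_rfl⟩)
    rw [Real.norm_eq_abs, hg0] at h2
    have hub : κ * u ≤ π/2 := by
      have h3 := hu.2
      rw [le_div_iff₀ (by positivity)] at h3
      linarith
    have h4 : g u ≥ 1 - κ * u := by
      have := (abs_sub_le_iff.mp h2).2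
      linarith
    nlinarith [pi_lt_d2]
  intro u₁ hu₁
  by_contra hcon
  push_neg at hcon
  set φ : ℝ → ℝ := fun u => Real.arccos (g u) with hφ
  have hφcont : Continuous φ := Real.continuous_arccos.comp hg.continuous
  have hκu₁ : κ * u₁ ≤ π := by
    have h3 := hu₁.2
    rw [le_div_iff₀ (by positivity)] at h3
    linarith [pi_pos]
  have hφu₁ : κ * u₁ < φ u₁ := by
    by_contra hle
    push_neg at hle
    have : Real.cos (κ * u₁) ≤ Real.cos (φ u₁) := by
      rcases eq_or_lt_of_le hle with h | h
      · rw [h]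
      · exact le_of_lt (Real.cos_lt_cos_of_nonneg_of_le_pi (Real.arccos_nonneg _) hκu₁ h)
    rw [hφ, Real.cos_arccos (neg_le_of_abs_le (hb u₁)) (le_of_abs_le (hb u₁))] at this
    linarith
  set A : Set ℝ := {u | u ∈ Set.Icc 0 u₁ ∧ φ u ≤ κ * u} with hA
  have hA0 : (0:ℝ) ∈ A := by
    constructor
    · exact Set.mem_Icc.mpr ⟨le_rfl, hu₁.1⟩
    · simp [hφ, hg0, Real.arccos_one]
  have hAne : A.Nonempty := ⟨0, hA0⟩
  have hAbdd : BddAbove A := ⟨u₁, fun x hx => hx.1.2⟩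
  have hAcl : IsClosed A := by
    apply IsClosed.inter isClosed_Icc
    exact isClosed_le hφcont (continuous_const.mul continuous_id)
  set u₀ : ℝ := sSup A with hu₀
  have hu₀A : u₀ ∈ A := hAcl.csSup_mem hAne hAbdd
  have hu₀le : φ u₀ ≤ κ * u₀ := hu₀A.2
  have hu₀nn : 0 ≤ u₀ := hu₀A.1.1
  have hu₀lt : u₀ < u₁ := by
    rcases lt_or_eq_of_le hu₀A.1.2 with h | h
    · exact h
    · exfalso; rw [h] at hu₀le; linarith
  have hnotin : ∀ u, u₀ < u → u ≤ u₁ → κ * u < φ u := by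
    intro u h1 h2
    by_contra hle
    push_neg at hle
    have hin : u ∈ A := ⟨Set.mem_Icc.mpr ⟨le_trans hu₀nn h1.le, h2⟩, hle⟩
    exact absurd (le_csSup hAbdd hin) (not_le.mpr h1)
  have hφderiv : ∀ x, u₀ < x → x ≤ u₁ →
      HasDerivAt φ (-(1 / Real.sqrt (1 - (g x)^2)) * deriv g x) x ∧
      ‖(-(1 / Real.sqrt (1 - (g x)^2)) * deriv g x)‖ ≤ κ := by
    intro x h1 h2
    have hxI : x ∈ Set.Icc (0:ℝ) (π/(2*κ)) := by
      constructor
      · linarith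
      · exact le_trans h2 hu₁.2
    have hxm1 : -1 < g x := hgt x hxI
    have hx1 : g x < 1 := by
      have hκx : 0 < κ * x := by
        have : 0 < x := lt_of_le_of_lt hu₀nn h1
        positivity
      have hpos : 0 < φ x := lt_trans hκx (hnotin x h1 h2)
      exact Real.arccos_pos.mp hpos
    have hsq : 0 < 1 - (g x)^2 := by nlinarith
    have hsqrt : 0 < Real.sqrt (1 - (g x)^2) := Real.sqrt_pos.mpr hsq
    constructor
    · exact (Real.hasDerivAt_arccos hxm1.ne' hx1.ne).comp x (hg x).hasDerivAt
    · rw [Real.norm_eq_abs, abs_mul, abs_neg, abs_div, abs_one,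
        abs_of_pos hsqrt]
      rw [div_mul_eq_mul_div, one_mul, div_le_iff₀ hsqrt]
      calc |deriv g x| ≤ κ * Real.sqrt (1 - (g x)^2) := hd x
        _ = κ * Real.sqrt (1 - (g x)^2) := rfl
  have key : ∀ ε ∈ Set.Ioo (0:ℝ) (u₁ - u₀), φ u₁ ≤ φ (u₀ + ε) + κ * (u₁ - (u₀ + ε)) := by
    intro ε hε
    have hab : u₀ + ε ≤ u₁ := by linarith [hε.2]
    have h1 : ∀ x ∈ Set.Icc (u₀ + ε) u₁,
        HasDerivWithinAt φ (-(1 / Real.sqrt (1 - (g x)^2)) * deriv g x) (Set.Icc (u₀+ε) u₁) x := by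
      intro x hx
      exact ((hφderiv x (by linarith [hx.1, hε.1]) hx.2).1).hasDerivWithinAt
    have h2 := norm_image_sub_le_of_norm_deriv_le_segment' h1
      (fun x hx => (hφderiv x (by linarith [hx.1, hε.1]) (le_of_lt hx.2)).2)
      u₁ (Set.mem_Icc.mpr ⟨hab, le_rfl⟩)
    rw [Real.norm_eq_abs] at h2
    have := (abs_sub_le_iff.mp h2).1
    linarith
  have tend : Filter.Tendsto (fun ε => φ (u₀ + ε) + κ * (u₁ - (u₀ + ε)))
      (nhdsWithin 0 (Set.Ioi 0)) (nhds (φ u₀ + κ * (u₁ - u₀))) := by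
    have hc : Continuous (fun ε : ℝ => φ (u₀ + ε) + κ * (u₁ - (u₀ + ε))) := by
      apply Continuous.add
      · exact hφcont.comp (continuous_const.add continuous_id)
      · exact continuous_const.mul (continuous_const.sub (continuous_const.add continuous_id))
    have := hc.tendsto 0
    simp only [add_zero] at this
    exact this.mono_left nhdsWithin_le_nhds
  have hfinal : φ u₁ ≤ φ u₀ + κ * (u₁ - u₀) := by
    refine ge_of_tendsto tend ?_
    filter_upwards [Ioo_mem_nhdsGT_of_mem (Set.mem_Ico.mpr ⟨le_rfl, sub_pos.mpr hu₀lt⟩)]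
      with ε hε
    exact key ε hε
  have : φ u₁ ≤ κ * u₁ := by linarith
  linarith

open RealInnerProductSpace in
/-- A unit-speed planar curve with curvature bounded by `κ > 0` satisfies
the chord-length lower bound `‖r s − r 0‖ ≥ (2/κ) sin(κ s / 2)` for `s ∈ [0, π/κ]`. -/
theorem stmt_5 (r : ℝ → EuclideanSpace ℝ (Fin 2)) (κ : ℝ) (hκ : 0 < κ)
    (hr : ContDiff ℝ 2 r)
    (hunit : ∀ s : ℝ, ‖deriv r s‖ = 1)
    (hcurv : ∀ s : ℝ, ‖deriv (deriv r) s‖ ≤ κ) :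
    ∀ s ∈ Set.Icc (0 : ℝ) (π / κ),
      (2 / κ) * Real.sin (κ * s / 2) ≤ ‖r s - r 0‖ := by
  intro s hs
  have h2 : ContDiff ℝ ((1:ℕ) + 1) r := by exact_mod_cast hr
  have hrd : Differentiable ℝ r := (contDiff_succ_iff_deriv.mp h2).1
  set T : ℝ → EuclideanSpace ℝ (Fin 2) := deriv r with hTdef
  have hT1 : ContDiff ℝ 1 T := (contDiff_succ_iff_deriv.mp h2).2.2
  have hTdiff : Differentiable ℝ T := hT1.differentiable one_ne_zero
  have horth : ∀ u, ⟪deriv T u, T u⟫ = (0:ℝ) := by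
    intro u
    have h1 : HasDerivAt (fun t => (⟪T t, T t⟫:ℝ)) (⟪T u, deriv T u⟫ + ⟪deriv T u, T u⟫) u :=
      ((hTdiff u).hasDerivAt).inner ℝ ((hTdiff u).hasDerivAt)
    have h2' : (fun t => (⟪T t, T t⟫:ℝ)) = fun _ => (1:ℝ) := by
      funext t
      rw [real_inner_self_eq_norm_sq, hunit t]; norm_num
    rw [h2'] at h1
    have h3 := h1.unique (hasDerivAt_const u (1:ℝ))
    have h4 : ⟪T u, deriv T u⟫ = (⟪deriv T u, T u⟫:ℝ) := real_inner_comm _ _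
    linarith [h3, h4.le, h4.ge]
  set v : ℝ := s / 2 with hvdef
  set w : EuclideanSpace ℝ (Fin 2) := T v with hwdef
  have hw1 : ‖w‖ = 1 := hunit v
  set G : ℝ → ℝ := fun t => ⟪T t, w⟫ with hGdef
  have hGderiv : ∀ u, HasDerivAt G ⟪deriv T u, w⟫ u := by
    intro u
    have h := ((hTdiff u).hasDerivAt).inner ℝ (hasDerivAt_const u w)
    have h2 : (⟪T u, (0:EuclideanSpace ℝ (Fin 2))⟫ + ⟪deriv T u, w⟫ : ℝ) = ⟪deriv T u, w⟫ := by
      rw [inner_zero_right, zero_add]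
    rw [h2] at h
    exact h
  have hGbound : ∀ u, |(⟪deriv T u, w⟫:ℝ)| ≤ κ * Real.sqrt (1 - (G u)^2) := by
    intro u
    have h1 := inner_bound (deriv T u) (T u) w (hunit u) hw1 (horth u)
    refine h1.trans ?_
    have := hcurv u
    gcongr
  have hGabs : ∀ u, |G u| ≤ 1 := by
    intro u
    have := abs_real_inner_le_norm (T u) w
    rwa [hunit u, hw1, one_mul] at this
  -- pointwise comparison
  have hsv : v ≤ π / (2*κ) := by
    have h1 : π/(2*κ) = (π/κ)/2 := by ring
    rw [h1, hvdef]
    linarith [hs.2]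
  have hpoint : ∀ u ∈ Set.Icc (0:ℝ) s, Real.cos (κ * (u - v)) ≤ G u := by
    intro u hu
    rcases le_or_gt v u with hc | hc
    · -- apply comp_lemma κ hκ to G (v + ·)
      set g₁ : ℝ → ℝ := fun t => G (v + t) with hg₁
      have hd₁ : ∀ t, HasDerivAt g₁ ⟪deriv T (v + t), w⟫ t := by
        intro t
        have := (hGderiv (v + t)).comp t ((hasDerivAt_id t).const_add v)
        rwa [mul_one] at this
      have key := comp_lemma κ hκ g₁ (fun t => (hd₁ t).differentiableAt)
        (by simp only [hg₁, add_zero, hGdef, hwdef]; rw [real_inner_self_eq_norm_sq, hunit v]; norm_num)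
        (fun t => hGabs (v + t))
        (by
          intro t
          rw [(hd₁ t).deriv]
          exact hGbound (v + t))
        (u - v) ⟨by linarith, by
          have : u - v ≤ v := by
            rw [hvdef]; simp only [hvdef] at *
            linarith [hu.2]
          linarith⟩
      simpa [hg₁] using key
    · set g₂ : ℝ → ℝ := fun t => G (v - t) with hg₂
      have hd₂ : ∀ t, HasDerivAt g₂ (⟪deriv T (v - t), w⟫ * (-1)) t := by
        intro t
        exact (hGderiv (v - t)).comp t ((hasDerivAt_id t).const_sub v)
      have key := comp_lemma κ hκ g₂ (fun t => (hd₂ t).differentiableAt)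
        (by simp only [hg₂, sub_zero, hGdef, hwdef]; rw [real_inner_self_eq_norm_sq, hunit v]; norm_num)
        (fun t => hGabs (v - t))
        (by
          intro t
          rw [(hd₂ t).deriv, abs_mul, abs_neg, abs_one, mul_one]
          exact hGbound (v - t))
        (v - u) ⟨by linarith, by
          have : v - u ≤ v := by linarith [hu.1]
          linarith⟩
      rw [show κ * (u - v) = -(κ * (v - u)) by ring, Real.cos_neg]
      simpa [hg₂] using key
  -- FTC for G
  have hGcont : Continuous G := Continuous.inner hT1.continuous continuous_const
  have hint1 : ∫ u in (0:ℝ)..s, G u = ⟪r s - r 0, w⟫ := by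
    have h1 : ∀ u ∈ Set.uIcc (0:ℝ) s, HasDerivAt (fun t => (⟪r t, w⟫:ℝ)) (G u) u := by
      intro u _
      have h := ((hrd u).hasDerivAt).inner ℝ (hasDerivAt_const u w)
      have h2 : (⟪r u, (0:EuclideanSpace ℝ (Fin 2))⟫ + ⟪deriv r u, w⟫ : ℝ) = G u := by
        rw [inner_zero_right, zero_add]
      rw [h2] at h
      exact h
    rw [intervalIntegral.integral_eq_sub_of_hasDerivAt h1 (hGcont.intervalIntegrable _ _)]
    rw [inner_sub_left]
  -- FTC for cos
  have hint2 : ∫ u in (0:ℝ)..s, Real.cos (κ * (u - v)) = (2/κ) * Real.sin (κ * s / 2) := by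
    have h1 : ∀ u ∈ Set.uIcc (0:ℝ) s,
        HasDerivAt (fun t => Real.sin (κ * (t - v)) / κ) (Real.cos (κ * (u - v))) u := by
      intro u _
      have h := (Real.hasDerivAt_sin (κ * (u - v))).comp u
        (((hasDerivAt_id u).sub_const v).const_mul κ)
      have h2 := h.div_const κ
      have h3 : Real.cos (κ * (u - v)) * (κ * 1) / κ = Real.cos (κ * (u - v)) := by
        rw [mul_one, mul_div_assoc, div_self hκ.ne', mul_one]
      rw [h3] at h2
      exact h2
    have hc : Continuous (fun u : ℝ => Real.cos (κ * (u - v))) :=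
      Real.continuous_cos.comp (continuous_const.mul (continuous_id.sub continuous_const))
    rw [intervalIntegral.integral_eq_sub_of_hasDerivAt h1 (hc.intervalIntegrable _ _)]
    rw [hvdef]
    rw [show κ * (s - s/2) = κ * s / 2 by ring, show κ * ((0:ℝ) - s/2) = -(κ * s / 2) by ring,
      Real.sin_neg]
    ring
  have hmono : ∫ u in (0:ℝ)..s, Real.cos (κ * (u - v)) ≤ ∫ u in (0:ℝ)..s, G u := by
    have hc : Continuous (fun u : ℝ => Real.cos (κ * (u - v))) :=
      Real.continuous_cos.comp (continuous_const.mul (continuous_id.sub continuous_const))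
    apply intervalIntegral.integral_mono_on hs.1
      (hc.intervalIntegrable _ _)
      (hGcont.intervalIntegrable _ _)
    exact hpoint
  have hfin : (⟪r s - r 0, w⟫:ℝ) ≤ ‖r s - r 0‖ := by
    have := real_inner_le_norm (r s - r 0) w
    rwa [hw1, mul_one] at this
  calc (2/κ) * Real.sin (κ * s / 2) = ∫ u in (0:ℝ)..s, Real.cos (κ * (u - v)) := hint2.symm
    _ ≤ ∫ u in (0:ℝ)..s, G u := hmono
    _ = ⟪r s - r 0, w⟫ := hint1
    _ ≤ ‖r s - r 0‖ := hfin
end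

section
/- Let r : ℝ → ℝ² be a twice continuously differentiable planar curve parameterized by arc length (‖r′(s)‖ = 1 for all s) with curvature bounded by κ > 0 (‖r″(s)‖ ≤ κ for all s), and let d_th > 0 satisfy κ·d_th ≤ 1. If L > 0 is such that ‖r(s) − r(0)‖ < d_th for all s ∈ (0, L], then L < (1/κ)·arcsin(κ·d_th). In other words, the arc length that the curve can travel while remaining strictly inside the closed ball of radius d_th centered at its starting point is less than (1/κ)·arcsin(κ·d_th). -/
open Real

open intervalIntegral
open scoped RealInnerProductSpace

lemma stmt6_aux (κ : ℝ) (hκ : 0 < κ) (u v a b : ℝ → ℝ)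
    (hca : Continuous a) (hcb : Continuous b)
    (hu' : ∀ s, HasDerivAt u (a s) s) (hv' : ∀ s, HasDerivAt v (b s) s)
    (huv : ∀ s, u s ^ 2 + v s ^ 2 = 1)
    (horth : ∀ s, u s * a s + v s * b s = 0)
    (hab : ∀ s, a s ^ 2 + b s ^ 2 ≤ κ ^ 2)
    (hu0 : u 0 = 1) (hv0 : v 0 = 0) :
    ∀ s, 0 ≤ s → κ * s ≤ π → Real.cos (κ * s) ≤ u s := by
  have hcu : Continuous u := continuous_iff_continuousAt.mpr fun s => (hu' s).continuousAt
  have hcv : Continuous v := continuous_iff_continuousAt.mpr fun s => (hv' s).continuousAt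
  set σ : ℝ → ℝ := fun s => u s * b s - v s * a s with hσdef
  have hcσ : Continuous σ := (hcu.mul hcb).sub (hcv.mul hca)
  have ha_eq : ∀ s, a s = -(σ s * v s) := by
    intro s
    simp only [hσdef]
    linear_combination u s * horth s - a s * huv s
  have hb_eq : ∀ s, b s = σ s * u s := by
    intro s
    simp only [hσdef]
    linear_combination v s * horth s - b s * huv s
  have hσ2 : ∀ s, σ s ^ 2 ≤ κ ^ 2 := by
    intro s
    have h : σ s ^ 2 = a s ^ 2 + b s ^ 2 := by
      simp only [hσdef]
      linear_combination (a s ^ 2 + b s ^ 2) * huv s - (u s * a s + v s * b s) * horth s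
    rw [h]; exact hab s
  have hσ_le : ∀ s, |σ s| ≤ κ := by
    intro s
    rw [abs_le]
    constructor <;> nlinarith [hσ2 s, sq_nonneg (σ s + κ), sq_nonneg (σ s - κ)]
  set θ : ℝ → ℝ := fun s => ∫ t in (0:ℝ)..s, σ t with hθdef
  have hθ' : ∀ s, HasDerivAt θ (σ s) s := fun s =>
    (hcσ.integral_hasStrictDerivAt 0 s).hasDerivAt
  have hθ0 : θ 0 = 0 := by simp [hθdef]
  have hθ_bound : ∀ s, 0 ≤ s → |θ s| ≤ κ * s := by
    intro s hs
    have h := intervalIntegral.norm_integral_le_of_norm_le_const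
      (a := 0) (b := s) (C := κ) (f := σ) (fun x _ => by simpa using hσ_le x)
    rw [sub_zero, Real.norm_eq_abs, abs_of_nonneg hs] at h
    simpa [hθdef] using h
  set D : ℝ → ℝ := fun s => (u s - Real.cos (θ s)) ^ 2 + (v s - Real.sin (θ s)) ^ 2 with hDdef
  have hD' : ∀ s, HasDerivAt D 0 s := by
    intro s
    have hc : HasDerivAt (fun t => Real.cos (θ t)) (-Real.sin (θ s) * σ s) s :=
      (Real.hasDerivAt_cos (θ s)).comp s (hθ' s)
    have hsn : HasDerivAt (fun t => Real.sin (θ t)) (Real.cos (θ s) * σ s) s :=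
      (Real.hasDerivAt_sin (θ s)).comp s (hθ' s)
    have h1' : HasDerivAt (fun t => u t - Real.cos (θ t)) (a s - -Real.sin (θ s) * σ s) s :=
      (hu' s).sub hc
    have h2' : HasDerivAt (fun t => v t - Real.sin (θ t)) (b s - Real.cos (θ s) * σ s) s :=
      (hv' s).sub hsn
    have h := (h1'.pow 2).add (h2'.pow 2)
    have heq : ((2:ℕ) : ℝ) * (u s - Real.cos (θ s)) ^ (2 - 1) * (a s - -Real.sin (θ s) * σ s) +
        ((2:ℕ) : ℝ) * (v s - Real.sin (θ s)) ^ (2 - 1) * (b s - Real.cos (θ s) * σ s) = 0 := by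
      rw [ha_eq s, hb_eq s]
      ring
    rw [heq] at h
    exact h
  have hDconst : ∀ s, D s = D 0 := fun s =>
    is_const_of_deriv_eq_zero (fun t => (hD' t).differentiableAt)
      (fun t => (hD' t).deriv) s 0
  have hD0 : D 0 = 0 := by
    simp only [hDdef, hu0, hv0, hθ0, Real.cos_zero, Real.sin_zero]
    ring
  have hu_cos : ∀ s, u s = Real.cos (θ s) := by
    intro s
    have h := hDconst s
    rw [hD0] at h
    simp only [hDdef] at h
    nlinarith [sq_nonneg (u s - Real.cos (θ s)), sq_nonneg (v s - Real.sin (θ s))]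
  intro s hs0 hsπ
  rw [hu_cos s, ← Real.cos_abs (θ s)]
  exact Real.cos_le_cos_of_nonneg_of_le_pi (abs_nonneg _) hsπ (hθ_bound s hs0)
open scoped RealInnerProductSpace

/-- A unit-speed planar curve with curvature bounded by `κ > 0`, where
`κ d_th ≤ 1`, can remain strictly inside the closed ball of radius `d_th` around its
starting point only for arc length less than `(1/κ) arcsin(κ d_th)`. -/
theorem stmt_6 (r : ℝ → EuclideanSpace ℝ (Fin 2)) (κ : ℝ) (hκ : 0 < κ)
    (hr : ContDiff ℝ 2 r)
    (hunit : ∀ s : ℝ, ‖deriv r s‖ = 1)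
    (hcurv : ∀ s : ℝ, ‖deriv (deriv r) s‖ ≤ κ)
    (dth : ℝ) (hdth : 0 < dth) (hκdth : κ * dth ≤ 1)
    (L : ℝ) (hL : 0 < L)
    (hin : ∀ s ∈ Set.Ioc (0 : ℝ) L, ‖r s - r 0‖ < dth) :
    L < (1 / κ) * Real.arcsin (κ * dth) := by
  by_contra hcon
  push_neg at hcon
  set s₀ : ℝ := (1 / κ) * Real.arcsin (κ * dth) with hs₀def
  have hx1 : 0 < κ * dth := mul_pos hκ hdth
  have harc_pos : 0 < Real.arcsin (κ * dth) := Real.arcsin_pos.2 hx1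
  have harc_le : Real.arcsin (κ * dth) ≤ π / 2 := Real.arcsin_le_pi_div_two _
  have hs₀pos : 0 < s₀ := by positivity
  have hκs₀ : κ * s₀ = Real.arcsin (κ * dth) := by
    rw [hs₀def]; field_simp
  -- regularity
  have h1 : ContDiff ℝ 1 (deriv r) := by
    have h := (contDiff_succ_iff_deriv (n := 1) (f := r) (𝕜 := ℝ))
    rw [show ((1:WithTop ℕ∞)+1) = 2 by norm_num] at h
    exact (h.mp hr).2.2
  have hdr : Differentiable ℝ r := hr.differentiable (by norm_num)
  have hd2 : Differentiable ℝ (deriv r) := (contDiff_one_iff_deriv.mp h1).1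
  have hc2 : Continuous (deriv (deriv r)) := (contDiff_one_iff_deriv.mp h1).2
  have hcr' : Continuous (deriv r) := hd2.continuous
  -- frame
  set e : EuclideanSpace ℝ (Fin 2) := deriv r 0 with hedef
  set n : EuclideanSpace ℝ (Fin 2) := !₂[-(e 1), e 0] with hndef
  have hinner : ∀ x y : EuclideanSpace ℝ (Fin 2),
      ⟪x, y⟫ = x 0 * y 0 + x 1 * y 1 := by
    intro x y
    rw [PiLp.inner_apply, Fin.sum_univ_two]
    simp [RCLike.inner_apply]; ring
  have hn0 : n 0 = -(e 1) := rfl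
  have hn1 : n 1 = e 0 := rfl
  have he_unit : e 0 ^ 2 + e 1 ^ 2 = 1 := by
    have h2 : ⟪e, e⟫ = 1 := by
      rw [real_inner_self_eq_norm_sq, hedef, hunit 0]; norm_num
    rw [hinner] at h2; nlinarith [h2]
  -- master identity for the orthonormal frame (e, n)
  have master : ∀ x y : EuclideanSpace ℝ (Fin 2),
      ⟪x, e⟫ * ⟪y, e⟫ + ⟪x, n⟫ * ⟪y, n⟫ = ⟪x, y⟫ := by
    intro x y
    simp only [hinner, hn0, hn1]
    linear_combination (x 0 * y 0 + x 1 * y 1) * he_unit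
  -- hypotheses of the auxiliary lemma
  have hca : Continuous fun s => ⟪deriv (deriv r) s, e⟫ := hc2.inner continuous_const
  have hcb : Continuous fun s => ⟪deriv (deriv r) s, n⟫ := hc2.inner continuous_const
  have hcu : Continuous fun s => ⟪deriv r s, e⟫ := hcr'.inner continuous_const
  have hu' : ∀ s, HasDerivAt (fun s => ⟪deriv r s, e⟫) ⟪deriv (deriv r) s, e⟫ s := by
    intro s
    have h := ((hd2 s).hasDerivAt).inner ℝ (hasDerivAt_const s e)
    simpa using h
  have hv' : ∀ s, HasDerivAt (fun s => ⟪deriv r s, n⟫) ⟪deriv (deriv r) s, n⟫ s := by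
    intro s
    have h := ((hd2 s).hasDerivAt).inner ℝ (hasDerivAt_const s n)
    simpa using h
  have huv : ∀ s, ⟪deriv r s, e⟫ ^ 2 + ⟪deriv r s, n⟫ ^ 2 = 1 := by
    intro s
    have h := master (deriv r s) (deriv r s)
    rw [real_inner_self_eq_norm_sq, hunit s] at h
    rw [one_pow] at h
    linear_combination h
  have hab2 : ∀ s, ⟪deriv (deriv r) s, e⟫ ^ 2 + ⟪deriv (deriv r) s, n⟫ ^ 2 ≤ κ ^ 2 := by
    intro s
    have h := master (deriv (deriv r) s) (deriv (deriv r) s)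
    rw [real_inner_self_eq_norm_sq] at h
    have h2 : ‖deriv (deriv r) s‖ ^ 2 ≤ κ ^ 2 := by
      nlinarith [hcurv s, norm_nonneg (deriv (deriv r) s)]
    have h3 : ⟪deriv (deriv r) s, e⟫ ^ 2 + ⟪deriv (deriv r) s, n⟫ ^ 2
        = ‖deriv (deriv r) s‖ ^ 2 := by rw [← h]; ring
    linarith
  have horth : ∀ s, ⟪deriv r s, e⟫ * ⟪deriv (deriv r) s, e⟫
      + ⟪deriv r s, n⟫ * ⟪deriv (deriv r) s, n⟫ = 0 := by
    intro s
    have hq : ∀ t, HasDerivAt (fun t => ⟪deriv r t, deriv r t⟫)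
        (⟪deriv r t, deriv (deriv r) t⟫ + ⟪deriv (deriv r) t, deriv r t⟫) t := by
      intro t
      exact ((hd2 t).hasDerivAt).inner ℝ ((hd2 t).hasDerivAt)
    have hconst : (fun t => ⟪deriv r t, deriv r t⟫) = fun _ => (1:ℝ) := by
      funext t
      rw [real_inner_self_eq_norm_sq, hunit t]; norm_num
    have h0 : ⟪deriv r s, deriv (deriv r) s⟫ + ⟪deriv (deriv r) s, deriv r s⟫ = 0 := by
      have h := hq s
      rw [hconst] at h
      exact h.unique (hasDerivAt_const _ _)
    have hsym : ⟪deriv r s, deriv (deriv r) s⟫ = ⟪deriv (deriv r) s, deriv r s⟫ :=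
      real_inner_comm _ _
    have h1' : ⟪deriv (deriv r) s, deriv r s⟫ = 0 := by
      rw [hsym] at h0; linarith
    have hm := master (deriv (deriv r) s) (deriv r s)
    rw [h1'] at hm
    linarith [hm]
  have hu0 : ⟪deriv r (0:ℝ), e⟫ = 1 := by
    rw [← hedef, real_inner_self_eq_norm_sq, hedef, hunit 0]; norm_num
  have hv0 : ⟪deriv r (0:ℝ), n⟫ = 0 := by
    rw [← hedef, hinner, hn0, hn1]; ring
  -- apply the auxiliary lemma
  have key := stmt6_aux κ hκ (fun s => ⟪deriv r s, e⟫) (fun s => ⟪deriv r s, n⟫)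
    (fun s => ⟪deriv (deriv r) s, e⟫) (fun s => ⟪deriv (deriv r) s, n⟫)
    hca hcb hu' hv' huv horth hab2 hu0 hv0
  -- projection function
  have hf' : ∀ s, HasDerivAt (fun s => ⟪r s - r 0, e⟫) ⟪deriv r s, e⟫ s := by
    intro s
    have h : HasDerivAt (fun t => r t - r 0) (deriv r s) s := ((hdr s).hasDerivAt).sub_const (r 0)
    have h2 := h.inner ℝ (hasDerivAt_const s e)
    simpa using h2
  have hf_int : ∫ t in (0:ℝ)..s₀, ⟪deriv r t, e⟫ = ⟪r s₀ - r 0, e⟫ := by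
    have h := intervalIntegral.integral_eq_sub_of_hasDerivAt
      (f := fun s => ⟪r s - r 0, e⟫) (f' := fun t => ⟪deriv r t, e⟫) (a := (0:ℝ)) (b := s₀)
      (fun x _ => hf' x) (hcu.intervalIntegrable 0 s₀)
    rw [h]
    simp
  have hcos_int : ∫ t in (0:ℝ)..s₀, Real.cos (κ * t) = dth := by
    rw [intervalIntegral.integral_comp_mul_left (fun x => Real.cos x) (ne_of_gt hκ)]
    rw [integral_cos]
    rw [mul_zero, Real.sin_zero, hκs₀, Real.sin_arcsin (by linarith) hκdth]
    rw [smul_eq_mul]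
    field_simp
    ring
  have hmono : ∫ t in (0:ℝ)..s₀, Real.cos (κ * t) ≤ ∫ t in (0:ℝ)..s₀, ⟪deriv r t, e⟫ := by
    apply intervalIntegral.integral_mono_on (le_of_lt hs₀pos)
    · exact (Real.continuous_cos.comp (continuous_const.mul continuous_id)).intervalIntegrable 0 s₀
    · exact hcu.intervalIntegrable 0 s₀
    · intro x hx
      refine key x hx.1 ?_
      have hκx : κ * x ≤ κ * s₀ := by nlinarith [hx.2]
      rw [hκs₀] at hκx
      linarith [Real.pi_pos]
  have hfle : ⟪r s₀ - r 0, e⟫ ≤ ‖r s₀ - r 0‖ := by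
    have h := real_inner_le_norm (r s₀ - r 0) e
    have he1 : ‖e‖ = 1 := by rw [hedef]; exact hunit 0
    rw [he1, mul_one] at h
    exact h
  have hlt := hin s₀ ⟨hs₀pos, hcon⟩
  rw [hf_int] at hmono
  rw [hcos_int] at hmono
  linarith
end

section
/- Let r : ℝ → ℝ², r(s) = (x(s), y(s)), be a twice continuously differentiable planar curve parameterized by arc length (‖r′(s)‖ = 1 for all s) with curvature bounded by κ > 0 (‖r″(s)‖ ≤ κ for all s), and suppose r(0) = (0,0) and r′(0) = (−1, 0). Then for every s ∈ [0, π/(2κ)], the lateral deviation satisfies |y(s)| ≤ (1 − cos(κ s))/κ; that is, the curve is confined between the two circular arcs of curvature κ tangent to the x-axis at the origin. -/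
open Real

private lemma comp_proj2 {f : ℝ → EuclideanSpace ℝ (Fin 2)} {v : EuclideanSpace ℝ (Fin 2)} {s : ℝ}
    (h : HasDerivAt f v s) (i : Fin 2) : HasDerivAt (fun t => f t i) (v i) s := by
  have := (EuclideanSpace.proj (𝕜 := ℝ) i).hasFDerivAt.comp_hasDerivAt s h
  exact this

private lemma abs_sin_le_sin {u v : ℝ} (h1 : |u| ≤ v) (h2 : v ≤ π / 2) :
    |Real.sin u| ≤ Real.sin v := by
  have hv0 : 0 ≤ v := le_trans (abs_nonneg u) h1
  have hmono : Real.sin |u| ≤ Real.sin v := by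
    apply Real.strictMonoOn_sin.monotoneOn
    · constructor
      · linarith [abs_nonneg u, Real.pi_pos]
      · linarith
    · exact ⟨by linarith [Real.pi_pos], h2⟩
    · exact h1
  have habs : |Real.sin u| = Real.sin |u| := by
    rcases abs_cases u with ⟨h, hu⟩ | ⟨h, hu⟩
    · rw [h, abs_of_nonneg]
      apply Real.sin_nonneg_of_nonneg_of_le_pi hu
      nlinarith [Real.pi_pos]
    · have hsu : 0 ≤ Real.sin (-u) := by
        apply Real.sin_nonneg_of_nonneg_of_le_pi (by linarith)
        have : -u = |u| := by rw [h]
        nlinarith [Real.pi_pos]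
      rw [Real.sin_neg] at hsu
      rw [h, Real.sin_neg, abs_of_nonpos (by linarith)]
  rw [habs]; exact hmono

/-- A unit-speed planar curve with curvature bounded by `κ > 0`, starting
at the origin with initial tangent `(−1, 0)`, has lateral deviation
`|y(s)| ≤ (1 − cos(κ s))/κ` for `s ∈ [0, π/(2κ)]`. -/
theorem stmt_7 (r : ℝ → EuclideanSpace ℝ (Fin 2)) (κ : ℝ) (hκ : 0 < κ)
    (hr : ContDiff ℝ 2 r)
    (hunit : ∀ s : ℝ, ‖deriv r s‖ = 1)
    (hcurv : ∀ s : ℝ, ‖deriv (deriv r) s‖ ≤ κ)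
    (hstart : r 0 = 0)
    (htangent0 : deriv r 0 0 = -1) (htangent1 : deriv r 0 1 = 0) :
    ∀ s ∈ Set.Icc (0 : ℝ) (π / (2 * κ)),
      |r s 1| ≤ (1 - Real.cos (κ * s)) / κ := by
  have hdr : Differentiable ℝ r := hr.differentiable (by norm_num)
  have hdr1 : ContDiff ℝ 1 (deriv r) := by
    have := (contDiff_succ_iff_deriv (n := 1)).mp (by exact_mod_cast hr)
    exact this.2.2
  have hddr : Differentiable ℝ (deriv r) := hdr1.differentiable (by norm_num)
  have hcont_dr : Continuous (deriv r) := hddr.continuous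
  have hcont_ddr : Continuous (deriv (deriv r)) := hdr1.continuous_deriv (by norm_num)
  set p : ℝ → ℝ := fun t => deriv r t 0 with hp_def
  set q : ℝ → ℝ := fun t => deriv r t 1 with hq_def
  set dp : ℝ → ℝ := fun t => deriv (deriv r) t 0 with hdp_def
  set dq : ℝ → ℝ := fun t => deriv (deriv r) t 1 with hdq_def
  have hp' : ∀ t, HasDerivAt p (dp t) t := fun t => comp_proj2 (hddr t).hasDerivAt 0
  have hq' : ∀ t, HasDerivAt q (dq t) t := fun t => comp_proj2 (hddr t).hasDerivAt 1
  have hy' : ∀ t, HasDerivAt (fun u => r u 1) (q t) t := fun t =>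
    comp_proj2 (hdr t).hasDerivAt 1
  have hcontp : Continuous p := (EuclideanSpace.proj (𝕜 := ℝ) (0 : Fin 2)).continuous.comp hcont_dr
  have hcontq : Continuous q := (EuclideanSpace.proj (𝕜 := ℝ) (1 : Fin 2)).continuous.comp hcont_dr
  have hcontdp : Continuous dp := (EuclideanSpace.proj (𝕜 := ℝ) (0 : Fin 2)).continuous.comp hcont_ddr
  have hcontdq : Continuous dq := (EuclideanSpace.proj (𝕜 := ℝ) (1 : Fin 2)).continuous.comp hcont_ddr
  -- unit speed in coordinates
  have hsq : ∀ t, p t ^ 2 + q t ^ 2 = 1 := by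
    intro t
    have h := hunit t
    rw [EuclideanSpace.norm_eq] at h
    simp [Fin.sum_univ_two, sq_abs] at h
    exact h
  -- curvature bound in coordinates
  have hcurv2 : ∀ t, dp t ^ 2 + dq t ^ 2 ≤ κ ^ 2 := by
    intro t
    have h := hcurv t
    rw [EuclideanSpace.norm_eq] at h
    simp only [Fin.sum_univ_two, Real.norm_eq_abs, sq_abs] at h
    have h' : Real.sqrt (dp t ^ 2 + dq t ^ 2) ≤ κ := h
    have h0 : (0:ℝ) ≤ dp t ^ 2 + dq t ^ 2 := by positivity
    nlinarith [Real.sq_sqrt h0, Real.sqrt_nonneg (dp t ^ 2 + dq t ^ 2)]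
  -- orthogonality
  have horth : ∀ t, p t * dp t + q t * dq t = 0 := by
    intro t
    have h1 : HasDerivAt (fun u => p u ^ 2 + q u ^ 2)
        (2 * p t ^ 1 * dp t + 2 * q t ^ 1 * dq t) t := ((hp' t).pow 2).add ((hq' t).pow 2)
    have heq : (fun u => p u ^ 2 + q u ^ 2) = fun _ => (1 : ℝ) := funext fun u => hsq u
    rw [heq] at h1
    have := h1.unique (hasDerivAt_const t 1)
    nlinarith [this]
  set k : ℝ → ℝ := fun t => p t * dq t - q t * dp t with hk_def
  have hcontk : Continuous k := (hcontp.mul hcontdq).sub (hcontq.mul hcontdp)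
  have hkbound : ∀ t, |k t| ≤ κ := by
    intro t
    have h1 : k t ^ 2 = dp t ^ 2 + dq t ^ 2 := by
      simp only [hk_def]
      nlinarith [horth t, hsq t]
    have := hcurv2 t
    rw [abs_le]
    constructor <;> nlinarith
  set θ : ℝ → ℝ := fun t => ∫ u in (0:ℝ)..t, k u with hθ_def
  have hθ' : ∀ t, HasDerivAt θ (k t) t := fun t =>
    intervalIntegral.integral_hasDerivAt_right (hcontk.intervalIntegrable 0 t)
      (hcontk.stronglyMeasurableAtFilter _ _) hcontk.continuousAt
  have hθbound : ∀ t, 0 ≤ t → |θ t| ≤ κ * t := by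
    intro t ht
    have := intervalIntegral.norm_integral_le_of_norm_le_const
      (C := κ) (f := k) (a := (0:ℝ)) (b := t) (fun x _ => by simpa using hkbound x)
    simpa [hθ_def, abs_of_nonneg ht] using this
  -- conserved quantities ⇒ q t = -sin (θ t)
  have key : ∀ t, q t = -Real.sin (θ t) := by
    have hf' : ∀ t, HasDerivAt (fun u => p u * Real.cos (θ u) + q u * Real.sin (θ u)) 0 t := by
      intro t
      have hc : HasDerivAt (fun u => Real.cos (θ u)) (-Real.sin (θ t) * k t) t :=
        (Real.hasDerivAt_cos (θ t)).comp t (hθ' t)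
      have hs : HasDerivAt (fun u => Real.sin (θ u)) (Real.cos (θ t) * k t) t :=
        (Real.hasDerivAt_sin (θ t)).comp t (hθ' t)
      have h := ((hp' t).mul hc).add ((hq' t).mul hs)
      refine h.congr_deriv (Eq.symm ?_)
      simp only [hk_def]
      linear_combination (-(Real.cos (θ t)) * p t - Real.sin (θ t) * q t) * horth t
        + (Real.cos (θ t) * dp t + Real.sin (θ t) * dq t) * hsq t
    have hg' : ∀ t, HasDerivAt (fun u => q u * Real.cos (θ u) - p u * Real.sin (θ u)) 0 t := by
      intro t
      have hc : HasDerivAt (fun u => Real.cos (θ u)) (-Real.sin (θ t) * k t) t :=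
        (Real.hasDerivAt_cos (θ t)).comp t (hθ' t)
      have hs : HasDerivAt (fun u => Real.sin (θ u)) (Real.cos (θ t) * k t) t :=
        (Real.hasDerivAt_sin (θ t)).comp t (hθ' t)
      have h := ((hq' t).mul hc).sub ((hp' t).mul hs)
      refine h.congr_deriv (Eq.symm ?_)
      simp only [hk_def]
      linear_combination (Real.sin (θ t) * p t - Real.cos (θ t) * q t) * horth t
        + (Real.cos (θ t) * dq t - Real.sin (θ t) * dp t) * hsq t
    have hθ0 : θ 0 = 0 := by simp [hθ_def]
    have hfconst : ∀ t, p t * Real.cos (θ t) + q t * Real.sin (θ t) = -1 := by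
      intro t
      have := is_const_of_deriv_eq_zero (f := fun u => p u * Real.cos (θ u) + q u * Real.sin (θ u))
        (fun u => (hf' u).differentiableAt) (fun u => (hf' u).deriv) t 0
      rw [this]
      simp [hθ0, hp_def, hq_def, htangent0, htangent1]
    have hgconst : ∀ t, q t * Real.cos (θ t) - p t * Real.sin (θ t) = 0 := by
      intro t
      have := is_const_of_deriv_eq_zero (f := fun u => q u * Real.cos (θ u) - p u * Real.sin (θ u))
        (fun u => (hg' u).differentiableAt) (fun u => (hg' u).deriv) t 0
      rw [this]
      simp [hθ0, hp_def, hq_def, htangent0, htangent1]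
    intro t
    have h1 := hfconst t
    have h2 := hgconst t
    have hcs : Real.cos (θ t) ^ 2 + Real.sin (θ t) ^ 2 = 1 := by
      rw [add_comm]; exact Real.sin_sq_add_cos_sq (θ t)
    linear_combination Real.sin (θ t) * h1 + Real.cos (θ t) * h2 - q t * hcs
  intro s hs
  obtain ⟨hs0, hs1⟩ := hs
  have hqbound : ∀ t ∈ Set.uIoc (0:ℝ) s, ‖q t‖ ≤ Real.sin (κ * t) := by
    intro t ht
    rw [Set.uIoc_of_le hs0] at ht
    obtain ⟨ht0, ht1⟩ := ht
    rw [key t, Real.norm_eq_abs, abs_neg]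
    have ht2 : t ≤ π / (2 * κ) := ht1.trans hs1
    have hhalf : κ * t ≤ π / 2 := by
      rw [le_div_iff₀ (by positivity : (0:ℝ) < 2 * κ)] at ht2
      nlinarith
    exact abs_sin_le_sin (hθbound t ht0.le) hhalf
  have hy0 : r 0 1 = 0 := by rw [hstart]; rfl
  have hyint : r s 1 = ∫ t in (0:ℝ)..s, q t := by
    have := intervalIntegral.integral_eq_sub_of_hasDerivAt
      (f := fun u => r u 1) (f' := q) (a := (0:ℝ)) (b := s)
      (fun t _ => hy' t) (hcontq.intervalIntegrable 0 s)
    rw [this]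
    simp [hy0]
  have hsinint : ∫ t in (0:ℝ)..s, Real.sin (κ * t) = (1 - Real.cos (κ * s)) / κ := by
    have hF : ∀ t ∈ Set.uIcc (0:ℝ) s, HasDerivAt (fun u => -Real.cos (κ * u) / κ)
        (Real.sin (κ * t)) t := by
      intro t _
      have h1 : HasDerivAt (fun u : ℝ => κ * u) κ t := by
        simpa using (hasDerivAt_id t).const_mul κ
      have h2 : HasDerivAt (fun u => Real.cos (κ * u)) (-Real.sin (κ * t) * κ) t :=
        (Real.hasDerivAt_cos (κ * t)).comp t h1
      have h3 := (h2.neg).div_const κ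
      have : - (-Real.sin (κ * t) * κ) / κ = Real.sin (κ * t) := by
        field_simp
      rwa [this] at h3
    have := intervalIntegral.integral_eq_sub_of_hasDerivAt hF
      ((Real.continuous_sin.comp (continuous_const.mul continuous_id)).intervalIntegrable 0 s)
    rw [this]
    show -Real.cos (κ * s) / κ - -Real.cos (κ * 0) / κ = _
    rw [mul_zero, Real.cos_zero]
    field_simp
    ring
  have hbd := intervalIntegral.norm_integral_le_abs_of_norm_le (μ := MeasureTheory.volume)
    (f := q) (a := (0:ℝ)) (b := s) (g := fun t => Real.sin (κ * t))
    ((MeasureTheory.ae_restrict_iff' measurableSet_uIoc).mpr (MeasureTheory.ae_of_all _ hqbound))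
    ((Real.continuous_sin.comp (continuous_const.mul continuous_id)).intervalIntegrable 0 s)
  rw [hyint]
  have hnn : 0 ≤ (1 - Real.cos (κ * s)) / κ := by
    have h1 := Real.cos_le_one (κ * s)
    apply div_nonneg (by linarith) hκ.le
  calc |∫ t in (0:ℝ)..s, q t| ≤ |∫ t in (0:ℝ)..s, Real.sin (κ * t)| := by
        simpa using hbd
    _ = (1 - Real.cos (κ * s)) / κ := by rw [hsinint, abs_of_nonneg hnn]
end

section
/- Let r : ℝ → ℝ² be a twice continuously differentiable planar curve parameterized by arc length (‖r′(s)‖ = 1 for all s) with curvature bounded by κ > 0 (‖r″(s)‖ ≤ κ for all s). Then for all s, t ∈ ℝ with κ·|s − t| ≤ π, the unit tangent vectors satisfy ⟨r′(s), r′(t)⟩ ≥ cos(κ·|s − t|), i.e., the angle between the tangent directions at arc-length parameters s and t is at most κ·|s − t|. -/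
open Real
open scoped RealInnerProductSpace

/-- For a unit-speed planar curve with curvature bounded by `κ > 0`, the
unit tangent vectors at parameters `s` and `t` with `κ|s − t| ≤ π` satisfy
`⟪r′(s), r′(t)⟫ ≥ cos(κ|s − t|)`. -/
theorem stmt_8 (r : ℝ → EuclideanSpace ℝ (Fin 2)) (κ : ℝ) (hκ : 0 < κ)
    (hr : ContDiff ℝ 2 r)
    (hunit : ∀ s : ℝ, ‖deriv r s‖ = 1)
    (hcurv : ∀ s : ℝ, ‖deriv (deriv r) s‖ ≤ κ) :
    ∀ s t : ℝ, κ * |s - t| ≤ π →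
      Real.cos (κ * |s - t|) ≤ ⟪deriv r s, deriv r t⟫ := by
  have h21 : (2 : WithTop ℕ∞) = 1 + 1 := by norm_num
  rw [h21] at hr
  have hd1 : Differentiable ℝ r := (contDiff_succ_iff_deriv.mp hr).1
  have hd2 : Differentiable ℝ (deriv r) :=
    (contDiff_succ_iff_deriv.mp hr).2.2.differentiable one_ne_zero
  -- orthogonality of r' and r''
  have horth : ∀ u : ℝ, ⟪deriv r u, deriv (deriv r) u⟫ = 0 := by
    intro u
    have h1 : HasDerivAt (fun u => ⟪deriv r u, deriv r u⟫)
        (⟪deriv r u, deriv (deriv r) u⟫ + ⟪deriv (deriv r) u, deriv r u⟫) u :=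
      (hd2 u).hasDerivAt.inner ℝ (hd2 u).hasDerivAt
    have h2 : (fun u : ℝ => ⟪deriv r u, deriv r u⟫) = fun _ => (1 : ℝ) := by
      funext u
      rw [real_inner_self_eq_norm_sq, hunit u]; norm_num
    rw [h2] at h1
    have h3 := h1.unique (hasDerivAt_const u (1 : ℝ))
    have h4 := real_inner_comm (deriv r u) (deriv (deriv r) u)
    linarith
  intro s t hst
  set v := deriv r s with hv
  set f : ℝ → ℝ := fun u => ⟪v, deriv r u⟫ with hf
  have hfs : f s = 1 := by
    simp only [hf, hv, real_inner_self_eq_norm_sq, hunit s]; norm_num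
  have hfb : ∀ u, |f u| ≤ 1 := by
    intro u
    calc |f u| ≤ ‖v‖ * ‖deriv r u‖ := abs_real_inner_le_norm _ _
    _ = 1 := by rw [hunit, hunit]; ring
  have hf' : ∀ u, HasDerivAt f ⟪v, deriv (deriv r) u⟫ u := by
    intro u
    have h := (hasDerivAt_const u v).inner ℝ (hd2 u).hasDerivAt
    simp only [inner_zero_left, add_zero] at h
    exact h
  -- key pointwise bound: |f'| ≤ κ √(1 - f²)
  have hbound : ∀ u, |⟪v, deriv (deriv r) u⟫| ≤ κ * Real.sqrt (1 - f u ^ 2) := by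
    intro u
    set w := deriv r u with hw
    set z := deriv (deriv r) u with hz
    have hvz : ⟪v - (f u) • w, z⟫ = ⟪v, z⟫ := by
      rw [inner_sub_left, real_inner_smul_left, horth u]; ring
    have hperp : ‖v - (f u) • w‖ ^ 2 = 1 - f u ^ 2 := by
      have hvw : ⟪v, w⟫ = f u := rfl
      rw [norm_sub_sq_real, real_inner_smul_right, norm_smul, hunit s, hunit u, hvw,
        Real.norm_eq_abs, mul_one, sq_abs]
      ring
    have hperpn : ‖v - (f u) • w‖ = Real.sqrt (1 - f u ^ 2) := by
      rw [← hperp]; exact (Real.sqrt_sq (norm_nonneg _)).symm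
    calc |⟪v, z⟫| = |⟪v - (f u) • w, z⟫| := by rw [hvz]
      _ ≤ ‖v - (f u) • w‖ * ‖z‖ := abs_real_inner_le_norm _ _
      _ ≤ Real.sqrt (1 - f u ^ 2) * κ := by
          rw [hperpn]
          exact mul_le_mul_of_nonneg_left (hcurv u) (Real.sqrt_nonneg _)
      _ = κ * Real.sqrt (1 - f u ^ 2) := mul_comm _ _
  -- for each ε ∈ (0,1), arccos ((1-ε) f ·) is κ-Lipschitz
  have hlip : ∀ ε : ℝ, 0 < ε → ε < 1 →
      Real.arccos ((1 - ε) * f t) ≤ Real.arccos (1 - ε) + κ * |s - t| := by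
    intro ε hε0 hε1
    set g : ℝ → ℝ := fun u => Real.arccos ((1 - ε) * f u) with hg
    have habs : ∀ u, |(1 - ε) * f u| ≤ 1 - ε := by
      intro u
      rw [abs_mul, abs_of_nonneg (by linarith : (0:ℝ) ≤ 1 - ε)]
      nlinarith [hfb u, abs_nonneg (f u)]
    have hg' : ∀ u, HasDerivAt g
        (-(1 / Real.sqrt (1 - ((1 - ε) * f u) ^ 2)) * ((1 - ε) * ⟪v, deriv (deriv r) u⟫)) u := by
      intro u
      have hne1 : (1 - ε) * f u ≠ -1 := by
        intro h; have := habs u; rw [h] at this; simp at this; linarith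
      have hne2 : (1 - ε) * f u ≠ 1 := by
        intro h; have := habs u; rw [h] at this; simp at this; linarith
      have harc := Real.hasDerivAt_arccos hne1 hne2
      exact HasDerivAt.comp (h₂ := Real.arccos) (h := fun u => (1 - ε) * f u) u harc (((hf' u).const_mul (1 - ε)))
    have hgb : ∀ u, ‖-(1 / Real.sqrt (1 - ((1 - ε) * f u) ^ 2)) *
        ((1 - ε) * ⟪v, deriv (deriv r) u⟫)‖ ≤ κ := by
      intro u
      have h1 : ((1 - ε) * f u) ^ 2 ≤ (1 - ε) ^ 2 := by
        nlinarith [habs u, abs_nonneg ((1 - ε) * f u), sq_abs ((1 - ε) * f u)]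
      have hpos : 0 < 1 - ((1 - ε) * f u) ^ 2 := by nlinarith
      have hsqpos : 0 < Real.sqrt (1 - ((1 - ε) * f u) ^ 2) := Real.sqrt_pos.mpr hpos
      rw [Real.norm_eq_abs, abs_mul, abs_neg, abs_div, abs_one, abs_mul]
      rw [abs_of_pos hsqpos, abs_of_nonneg (by linarith : (0:ℝ) ≤ 1 - ε)]
      rw [div_mul_eq_mul_div, one_mul, div_le_iff₀ hsqpos]
      -- goal: (1-ε) * |⟪v, r'' u⟫| ≤ κ * √(1 - ((1-ε) f u)²)
      have key : (1 - ε) * Real.sqrt (1 - f u ^ 2) ≤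
          Real.sqrt (1 - ((1 - ε) * f u) ^ 2) := by
        have hrw : (1 - ε) * Real.sqrt (1 - f u ^ 2) =
            Real.sqrt ((1 - ε) ^ 2 * (1 - f u ^ 2)) := by
          rw [Real.sqrt_mul (by positivity), Real.sqrt_sq (by linarith)]
        rw [hrw]
        apply Real.sqrt_le_sqrt
        nlinarith [hfb u, sq_abs (f u), sq_nonneg ε, sq_nonneg (f u)]
      calc (1 - ε) * |⟪v, deriv (deriv r) u⟫|
          ≤ (1 - ε) * (κ * Real.sqrt (1 - f u ^ 2)) := by
            exact mul_le_mul_of_nonneg_left (hbound u) (by linarith)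
        _ = κ * ((1 - ε) * Real.sqrt (1 - f u ^ 2)) := by ring
        _ ≤ κ * Real.sqrt (1 - ((1 - ε) * f u) ^ 2) :=
            mul_le_mul_of_nonneg_left key hκ.le
    have hmvt := Convex.norm_image_sub_le_of_norm_hasDerivWithin_le
      (f := g)
      (f' := fun u => -(1 / Real.sqrt (1 - ((1 - ε) * f u) ^ 2)) *
        ((1 - ε) * ⟪v, deriv (deriv r) u⟫))
      (fun u _ => (hg' u).hasDerivWithinAt) (fun u _ => hgb u)
      convex_univ (Set.mem_univ s) (Set.mem_univ t)
    have hgs : g s = Real.arccos (1 - ε) := by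
      simp only [hg, hfs, mul_one]
    have h1 : g t - g s ≤ |g t - g s| := le_abs_self _
    rw [Real.norm_eq_abs, Real.norm_eq_abs] at hmvt
    have : |t - s| = |s - t| := abs_sub_comm t s
    rw [this] at hmvt
    have := h1.trans hmvt
    rw [hgs] at this
    linarith
  -- pass to the limit ε → 0⁺
  have hft1 : -1 ≤ f t := by have := hfb t; rw [abs_le] at this; exact this.1
  have hft2 : f t ≤ 1 := by have := hfb t; rw [abs_le] at this; exact this.2
  have hlim : Real.arccos (f t) ≤ κ * |s - t| := by
    have htends1 : Filter.Tendsto (fun ε : ℝ => Real.arccos ((1 - ε) * f t))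
        (nhdsWithin 0 (Set.Ioo 0 1)) (nhds (Real.arccos (f t))) := by
      have : Filter.Tendsto (fun ε : ℝ => (1 - ε) * f t)
          (nhdsWithin 0 (Set.Ioo 0 1)) (nhds (f t)) := by
        have hc : Continuous fun ε : ℝ => (1 - ε) * f t := (continuous_const.sub continuous_id).mul continuous_const
        have := (hc.tendsto 0).mono_left (nhdsWithin_le_nhds (s := Set.Ioo (0:ℝ) 1))
        simpa using this
      exact (Real.continuous_arccos.continuousAt).tendsto.comp this
    have htends2 : Filter.Tendsto (fun ε : ℝ => Real.arccos (1 - ε) + κ * |s - t|)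
        (nhdsWithin 0 (Set.Ioo 0 1)) (nhds (Real.arccos 1 + κ * |s - t|)) := by
      have : Filter.Tendsto (fun ε : ℝ => (1 : ℝ) - ε)
          (nhdsWithin 0 (Set.Ioo 0 1)) (nhds 1) := by
        have hc : Continuous fun ε : ℝ => (1 : ℝ) - ε := continuous_const.sub continuous_id
        have := (hc.tendsto 0).mono_left (nhdsWithin_le_nhds (s := Set.Ioo (0:ℝ) 1))
        simpa using this
      exact (((Real.continuous_arccos.continuousAt).tendsto.comp this).add tendsto_const_nhds)
    have hne : (nhdsWithin (0:ℝ) (Set.Ioo 0 1)).NeBot := by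
      apply mem_closure_iff_nhdsWithin_neBot.mp
      rw [closure_Ioo (by norm_num : (0:ℝ) ≠ 1)]
      exact ⟨le_refl 0, by norm_num⟩
    have := le_of_tendsto_of_tendsto htends1 htends2
      (Filter.eventually_iff_exists_mem.mpr ⟨Set.Ioo 0 1, self_mem_nhdsWithin,
        fun ε hε => hlip ε hε.1 hε.2⟩)
    rwa [Real.arccos_one, zero_add] at this
  have := Real.cos_le_cos_of_nonneg_of_le_pi (Real.arccos_nonneg _)
    hst hlim
  rwa [Real.cos_arccos hft1 hft2] at this
end

section
/- Let r : ℝ → ℝ² be a twice continuously differentiable planar curve parameterized by arc length (‖r′(s)‖ = 1 for all s) with curvature bounded by κ > 0 (‖r″(s)‖ ≤ κ for all s), and let d_th > 0 satisfy κ·d_th < 1. Then the curve cannot loop while inside a ball of radius d_th: for every s ∈ ℝ and every d ≥ 0 such that ‖r(s − d′) − r(s)‖ ≤ d_th for all d′ ∈ [0, d], one has ⟨r′(s − d), r′(s)⟩ > 0, i.e., as long as the backward-traced portion of the curve has remained inside the closed ball of radius d_th centered at r(s), its tangent direction never acquires a component opposite to the tangent direction at r(s). -/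
open Real
open scoped RealInnerProductSpace

lemma circle_lift (z z' : ℝ → ℂ) (κ : ℝ)
    (hz : ∀ t, HasDerivAt z (z' t) t) (hz'c : Continuous z')
    (hnorm : ∀ t, ‖z t‖ = 1) (hz0 : z 0 = 1)
    (hb : ∀ t, ‖z' t‖ ≤ κ) :
    ∃ θ : ℝ → ℝ, (∀ t, z t = Complex.exp (θ t * Complex.I)) ∧
      ∀ t, |θ t| ≤ κ * |t| := by
  have hzc : Continuous z := by
    refine continuous_iff_continuousAt.2 fun t => (hz t).continuousAt
  set φ : ℝ → ℝ := fun t => ((starRingEnd ℂ) (z t) * z' t).im with hφ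
  have hφc : Continuous φ := Complex.continuous_im.comp ((Complex.continuous_conj.comp hzc).mul hz'c)
  set θ : ℝ → ℝ := fun t => ∫ u in (0:ℝ)..t, φ u with hθ
  have hθd : ∀ t, HasDerivAt θ (φ t) t := fun t =>
    (hφc.integral_hasStrictDerivAt 0 t).hasDerivAt
  -- re (conj z * z') = 0
  have hre : ∀ t, ((starRingEnd ℂ) (z t) * z' t).re = 0 := by
    intro t
    have h1 : HasDerivAt (fun t => (starRingEnd ℂ) (z t)) ((starRingEnd ℂ) (z' t)) t :=
      (Complex.conjCLE : ℂ ≃L[ℝ] ℂ).toContinuousLinearMap.hasFDerivAt.comp_hasDerivAt t (hz t)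
    have h2 := (h1.mul (hz t))
    have h3 : HasDerivAt (fun t => ((starRingEnd ℂ) (z t) * z t).re)
        ((starRingEnd ℂ) (z' t) * z t + (starRingEnd ℂ) (z t) * z' t).re t :=
      (Complex.reCLM.hasFDerivAt.comp_hasDerivAt t h2)
    have hNconst : (fun t => ((starRingEnd ℂ) (z t) * z t).re) = fun _ => (1:ℝ) := by
      funext u
      have : (starRingEnd ℂ) (z u) * z u = (Complex.normSq (z u) : ℂ) := by
        rw [mul_comm, Complex.mul_conj]
      rw [this]
      simp [Complex.normSq_eq_norm_sq, hnorm u]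
    rw [hNconst] at h3
    have h0 : ((starRingEnd ℂ) (z' t) * z t + (starRingEnd ℂ) (z t) * z' t).re = 0 :=
      h3.unique (hasDerivAt_const t 1)
    have heq : (starRingEnd ℂ) (z' t) * z t = (starRingEnd ℂ) ((starRingEnd ℂ) (z t) * z' t) := by
      rw [map_mul]; simp [mul_comm]
    rw [Complex.add_re, heq, Complex.conj_re] at h0
    linarith
  have key : ∀ t, z' t = (↑(φ t) * Complex.I) * z t := by
    intro t
    have h1 : (starRingEnd ℂ) (z t) * z' t = ↑(φ t) * Complex.I := by
      apply Complex.ext <;> simp [hre t, hφ]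
    have h2 : z t * (starRingEnd ℂ) (z t) = 1 := by
      rw [Complex.mul_conj]
      norm_cast
      simp [Complex.normSq_eq_norm_sq, hnorm t]
    calc z' t = (z t * (starRingEnd ℂ) (z t)) * z' t := by rw [h2, one_mul]
    _ = z t * ((starRingEnd ℂ) (z t) * z' t) := by ring
    _ = (↑(φ t) * Complex.I) * z t := by rw [h1]; ring
  set w : ℝ → ℂ := fun t => z t * Complex.exp (-(↑(θ t) * Complex.I)) with hw
  have hwd : ∀ t, HasDerivAt w 0 t := by
    intro t
    have hin : HasDerivAt (fun t => -((θ t : ℂ) * Complex.I)) (-((φ t : ℂ) * Complex.I)) t :=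
      (((hθd t).ofReal_comp).mul_const Complex.I).neg
    have hexp := hin.cexp
    have := (hz t).mul hexp
    convert this using 1
    · rfl
    · rfl
    rw [key t]
    ring
  have hwconst : ∀ t, w t = 1 := by
    have hd : Differentiable ℝ w := fun t => (hwd t).differentiableAt
    have h0 : ∀ t, deriv w t = 0 := fun t => (hwd t).deriv
    intro t
    have := is_const_of_deriv_eq_zero hd h0 t 0
    rw [this]
    simp [hw, hθ, hz0]
  refine ⟨θ, fun t => ?_, fun t => ?_⟩
  · have h := hwconst t
    have : z t * (Complex.exp (-(↑(θ t) * Complex.I)) * Complex.exp (↑(θ t) * Complex.I))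
        = Complex.exp (↑(θ t) * Complex.I) := by
      rw [← mul_assoc, show z t * Complex.exp (-(↑(θ t) * Complex.I)) = 1 from h, one_mul]
    rwa [← Complex.exp_add, neg_add_cancel, Complex.exp_zero, mul_one] at this
  · have hbd : ∀ u ∈ Set.uIoc (0:ℝ) t, ‖φ u‖ ≤ κ := by
      intro u _
      have : |φ u| ≤ ‖(starRingEnd ℂ) (z u) * z' u‖ := Complex.abs_im_le_norm _
      rw [norm_mul, Complex.norm_conj, hnorm u, one_mul] at this
      exact le_trans this (hb u)
    have := intervalIntegral.norm_integral_le_of_norm_le_const hbd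
    simpa using this

set_option maxHeartbeats 1000000 in
/-- A unit-speed planar curve with curvature bounded by `κ > 0`, where
`κ d_th < 1`, cannot loop while inside a ball of radius `d_th`: as long as the
backward-traced portion of the curve has remained inside the closed ball of radius `d_th`
centered at `r s`, the tangent direction keeps a positive component along the tangent
direction at `r s`. -/
theorem stmt_9 (r : ℝ → EuclideanSpace ℝ (Fin 2)) (κ : ℝ) (hκ : 0 < κ)
    (hr : ContDiff ℝ 2 r)
    (hunit : ∀ s : ℝ, ‖deriv r s‖ = 1)
    (hcurv : ∀ s : ℝ, ‖deriv (deriv r) s‖ ≤ κ)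
    (dth : ℝ) (hdth : 0 < dth) (hκdth : κ * dth < 1) :
    ∀ s : ℝ, ∀ d : ℝ, 0 ≤ d →
      (∀ d' ∈ Set.Icc (0 : ℝ) d, ‖r (s - d') - r s‖ ≤ dth) →
      0 < ⟪deriv r (s - d), deriv r s⟫ := by
  intro s d hd hball
  by_contra hcon
  push_neg at hcon
  -- regularity
  have h2 : ContDiff ℝ ((1 : ℕ) + 1) r := by norm_num; exact hr
  obtain ⟨hrdiff, -, hT1⟩ := contDiff_succ_iff_deriv.mp h2
  obtain ⟨hTdiff, hAc⟩ := contDiff_one_iff_deriv.mp hT1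
  set T := deriv r with hT
  set A := deriv T with hA
  have hrd : ∀ x, HasDerivAt r (T x) x := fun x => (hrdiff x).hasDerivAt
  have hTd : ∀ x, HasDerivAt T (A x) x := fun x => (hTdiff x).hasDerivAt
  have hTc : Continuous T := hTdiff.continuous
  set e1 := T s with he1
  have he1n : ‖e1‖ = 1 := hunit s
  set e2 : EuclideanSpace ℝ (Fin 2) := !₂[-(e1 1), e1 0] with he2
  have hinner : ∀ v w : EuclideanSpace ℝ (Fin 2), ⟪v, w⟫ = v 0 * w 0 + v 1 * w 1 := by
    intro v w
    simp [PiLp.inner_apply, Fin.sum_univ_two, RCLike.inner_apply, mul_comm]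
  have parseval : ∀ v : EuclideanSpace ℝ (Fin 2), ⟪v, e1⟫ ^ 2 + ⟪v, e2⟫ ^ 2 = ‖v‖ ^ 2 := by
    intro v
    have h20 : e2 0 = -(e1 1) := rfl
    have h21 : e2 1 = e1 0 := rfl
    have h1 : ⟪v, e1⟫ ^ 2 + ⟪v, e2⟫ ^ 2 = ⟪v, v⟫ * ⟪e1, e1⟫ := by
      rw [hinner, hinner, hinner, hinner, h20, h21]; ring
    rw [h1, real_inner_self_eq_norm_sq, real_inner_self_eq_norm_sq, he1n]
    ring
  have he12 : ⟪e1, e2⟫ = 0 := by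
    have h20 : e2 0 = -(e1 1) := rfl
    have h21 : e2 1 = e1 0 := rfl
    rw [hinner, h20, h21]; ring
  have he11 : ⟪e1, e1⟫ = (1 : ℝ) := by
    rw [real_inner_self_eq_norm_sq, he1n]; norm_num
  -- f, g and their derivatives
  set f : ℝ → ℝ := fun t => ⟪T (s - t), e1⟫ with hf
  set g : ℝ → ℝ := fun t => ⟪T (s - t), e2⟫ with hg
  have hsub : ∀ t : ℝ, HasDerivAt (fun t : ℝ => s - t) (-1) t := fun t =>
    (hasDerivAt_id t).const_sub s
  have hud : ∀ t, HasDerivAt (fun t => T (s - t)) ((-1 : ℝ) • A (s - t)) t := fun t =>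
    (hTd (s - t)).scomp t (hsub t)
  have hfd : ∀ t, HasDerivAt f (-⟪A (s - t), e1⟫) t := by
    intro t
    have := HasDerivAt.inner ℝ (hud t) (hasDerivAt_const t e1)
    simpa only [inner_zero_right, neg_one_smul, inner_neg_left, zero_add] using this
  have hgd : ∀ t, HasDerivAt g (-⟪A (s - t), e2⟫) t := by
    intro t
    have := HasDerivAt.inner ℝ (hud t) (hasDerivAt_const t e2)
    simpa only [inner_zero_right, neg_one_smul, inner_neg_left, zero_add] using this
  have hfc : Continuous f :=
    (hTc.comp (continuous_const.sub continuous_id)).inner continuous_const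
  have hf'c : Continuous fun t => -⟪A (s - t), e1⟫ :=
    ((hAc.comp (continuous_const.sub continuous_id)).inner continuous_const).neg
  have hg'c : Continuous fun t => -⟪A (s - t), e2⟫ :=
    ((hAc.comp (continuous_const.sub continuous_id)).inner continuous_const).neg
  have hf0 : f 0 = 1 := by
    show ⟪T (s - 0), e1⟫ = 1
    rw [sub_zero]; exact he11
  have hg0 : g 0 = 0 := by
    show ⟪T (s - 0), e2⟫ = 0
    rw [sub_zero]; exact he12
  -- complex curve
  set z : ℝ → ℂ := fun t => (f t : ℂ) + (g t : ℂ) * Complex.I with hz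
  set z' : ℝ → ℂ := fun t =>
    ((-⟪A (s - t), e1⟫ : ℝ) : ℂ) + ((-⟪A (s - t), e2⟫ : ℝ) : ℂ) * Complex.I with hz'
  have hzd : ∀ t, HasDerivAt z (z' t) t := fun t =>
    ((hfd t).ofReal_comp).add (((hgd t).ofReal_comp).mul_const Complex.I)
  have hz'c : Continuous z' :=
    (Complex.continuous_ofReal.comp hf'c).add
      ((Complex.continuous_ofReal.comp hg'c).mul continuous_const)
  have habs : ∀ (x y : ℝ), ‖(x : ℂ) + (y : ℂ) * Complex.I‖ ^ 2 = x ^ 2 + y ^ 2 := by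
    intro x y
    rw [Complex.sq_norm, Complex.normSq_add_mul_I]
  have hznorm : ∀ t, ‖z t‖ = 1 := by
    intro t
    have h1 : ‖z t‖ ^ 2 = f t ^ 2 + g t ^ 2 := habs _ _
    have h2 := parseval (T (s - t))
    have h3 := hunit (s - t)
    rw [h3] at h2
    nlinarith [norm_nonneg (z t)]
  have hz'b : ∀ t, ‖z' t‖ ≤ κ := by
    intro t
    have h1 : ‖z' t‖ ^ 2 = (-⟪A (s - t), e1⟫) ^ 2 + (-⟪A (s - t), e2⟫) ^ 2 := habs _ _
    have h2 := parseval (A (s - t))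
    have h3 : ‖A (s - t)‖ ≤ κ := hcurv (s - t)
    nlinarith [norm_nonneg (z' t), norm_nonneg (A (s - t))]
  have hz0 : z 0 = 1 := by
    show (f 0 : ℂ) + (g 0 : ℂ) * Complex.I = 1
    rw [hf0, hg0]; simp
  obtain ⟨θ, hθz, hθb⟩ := circle_lift z z' κ hzd hz'c hznorm hz0 hz'b
  have hfcos : ∀ t, f t = Real.cos (θ t) := by
    intro t
    have h1 := congrArg Complex.re (hθz t)
    rw [Complex.exp_ofReal_mul_I_re] at h1
    have h2 : (z t).re = f t := by
      show ((f t : ℂ) + (g t : ℂ) * Complex.I).re = f t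
      simp
    rw [h2] at h1
    exact h1
  have hfge : ∀ t : ℝ, 0 ≤ t → κ * t ≤ π → Real.cos (κ * t) ≤ f t := by
    intro t ht hπ
    rw [hfcos t]
    have h1 : |θ t| ≤ κ * t := by
      have := hθb t; rwa [abs_of_nonneg ht] at this
    calc Real.cos (κ * t) ≤ Real.cos |θ t| :=
          Real.cos_le_cos_of_nonneg_of_le_pi (abs_nonneg _) hπ h1
    _ = Real.cos (θ t) := Real.cos_abs _
  -- first zero of f
  set S : Set ℝ := Set.Icc 0 d ∩ {t | f t ≤ 0} with hS
  have hSne : S.Nonempty := ⟨d, ⟨hd, le_refl d⟩, hcon⟩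
  have hSbdd : BddBelow S := ⟨0, fun x hx => hx.1.1⟩
  have hScl : IsClosed S := isClosed_Icc.inter (isClosed_le hfc continuous_const)
  set t0 := sInf S with ht0
  have ht0S : t0 ∈ S := hScl.csInf_mem hSne hSbdd
  obtain ⟨⟨ht00, ht0d⟩, ht0f⟩ := ht0S
  have hle0 : f t0 ≤ 0 := ht0f
  have hpos : ∀ t, 0 ≤ t → t < t0 → 0 < f t := by
    intro t ht htlt
    by_contra hle; push_neg at hle
    have hmem : t ∈ S := ⟨⟨ht, le_trans htlt.le ht0d⟩, hle⟩
    exact absurd (csInf_le hSbdd hmem) (not_le.2 htlt)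
  have ht0pos : 0 < t0 := by
    rcases eq_or_lt_of_le ht00 with h | h
    · exfalso; rw [← h, hf0] at hle0; linarith
    · exact h
  set a := π / (2 * κ) with ha
  have hapos : 0 < a := by positivity
  have hκa : κ * a = π / 2 := by rw [ha]; field_simp
  have hat0 : a ≤ t0 := by
    by_contra hlt; push_neg at hlt
    have h1 : κ * t0 ≤ π := by nlinarith [pi_pos]
    have h2 : Real.cos (κ * t0) ≤ f t0 := hfge t0 ht00 h1
    have h3 : 0 < Real.cos (κ * t0) := by
      apply Real.cos_pos_of_mem_Ioo
      constructor
      · nlinarith [pi_pos]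
      · nlinarith [pi_pos]
    linarith [hle0]
  have hft0 : 0 ≤ f t0 := by
    have htend : Filter.Tendsto f (nhdsWithin t0 (Set.Iio t0)) (nhds (f t0)) :=
      (hfc.continuousAt (x := t0)).continuousWithinAt.tendsto
    refine ge_of_tendsto htend ?_
    filter_upwards [Ioo_mem_nhdsLT_of_mem (⟨ht0pos, le_refl t0⟩ : t0 ∈ Set.Ioc 0 t0)] with t ht
    exact (hpos t ht.1.le ht.2).le
  have hf0' : ∀ t ∈ Set.Icc a t0, 0 ≤ f t := by
    rintro t ⟨h1, h2⟩
    rcases eq_or_lt_of_le h2 with h | h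
    · rw [h]; exact hft0
    · exact (hpos t (le_trans hapos.le h1) h).le
  have hfint : ∀ u v : ℝ, IntervalIntegrable f MeasureTheory.volume u v := fun u v =>
    hfc.intervalIntegrable u v
  -- displacement function
  set H : ℝ → ℝ := fun t => ⟪r s - r (s - t), e1⟫ with hH
  have hHd : ∀ t, HasDerivAt H (f t) t := by
    intro t
    have h1 : HasDerivAt (fun t => r (s - t)) ((-1 : ℝ) • T (s - t)) t :=
      (hrd (s - t)).scomp t (hsub t)
    have h2 := h1.const_sub (r s)
    have h3 := HasDerivAt.inner ℝ h2 (hasDerivAt_const t e1)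
    simpa only [inner_zero_right, neg_one_smul, neg_neg, inner_neg_left, zero_add] using h3
  have hHt0 : H t0 = ∫ u in (0 : ℝ)..t0, f u := by
    rw [intervalIntegral.integral_eq_sub_of_hasDerivAt (fun u _ => hHd u) (hfint 0 t0)]
    simp [hH]
  have hcosint : ∫ u in (0 : ℝ)..a, Real.cos (κ * u) = 1 / κ := by
    have hder : ∀ u ∈ Set.uIcc (0 : ℝ) a,
        HasDerivAt (fun x => Real.sin (κ * x) / κ) (Real.cos (κ * u)) u := by
      intro u _
      have h1 : HasDerivAt (fun x : ℝ => κ * x) κ u := by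
        simpa using (hasDerivAt_id u).const_mul κ
      have h2 := (h1.sin).div_const κ
      have h3 : Real.cos (κ * u) * κ / κ = Real.cos (κ * u) := by
        field_simp
      rwa [h3] at h2
    rw [intervalIntegral.integral_eq_sub_of_hasDerivAt hder
      ((Real.continuous_cos.comp (continuous_const.mul continuous_id)).intervalIntegrable 0 a)]
    rw [hκa]
    simp
  have hint1 : (1 : ℝ) / κ ≤ ∫ u in (0 : ℝ)..a, f u := by
    rw [← hcosint]
    apply intervalIntegral.integral_mono_on hapos.le
      ((Real.continuous_cos.comp (continuous_const.mul continuous_id)).intervalIntegrable 0 a)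
      (hfint 0 a)
    intro u hu
    have h1 : κ * u ≤ π := by nlinarith [pi_pos, hu.2]
    exact hfge u hu.1 h1
  have hint2 : 0 ≤ ∫ u in a..t0, f u := intervalIntegral.integral_nonneg hat0 hf0'
  have hsplit : ∫ u in (0 : ℝ)..t0, f u = (∫ u in (0 : ℝ)..a, f u) + ∫ u in a..t0, f u :=
    (intervalIntegral.integral_add_adjacent_intervals (hfint 0 a) (hfint a t0)).symm
  have hup : H t0 ≤ dth := by
    have h1 : H t0 ≤ ‖r s - r (s - t0)‖ * ‖e1‖ := real_inner_le_norm _ _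
    rw [he1n, mul_one] at h1
    have h2 : ‖r s - r (s - t0)‖ = ‖r (s - t0) - r s‖ := norm_sub_rev _ _
    exact h1.trans (h2 ▸ hball t0 ⟨ht00, ht0d⟩)
  have hfin : (1 : ℝ) / κ ≤ dth := by
    rw [hHt0, hsplit] at hup
    linarith
  rw [div_le_iff₀ hκ] at hfin
  nlinarith
end

section
/- Let β_SH, σ_SH > 0 and d_1, d_r, d_{1r} > 0, and set ρ = e^{−d_1/β_SH}. Let Σ be the 2×2 matrix with diagonal entries σ_SH² and off-diagonal entries σ_SH²·e^{−d_{1r}/β_SH} (which is invertible since d_{1r} > 0), and let c be the vector (σ_SH²·e^{−d_1/β_SH}, σ_SH²·e^{−d_r/β_SH}). Then the coefficient vector α = Σ⁻¹·c has components α_1 = (e^{−d_1/β_SH} − e^{−(d_{1r}+d_r)/β_SH})/(1 − e^{−2d_{1r}/β_SH}) and α_r = (e^{−d_r/β_SH} − e^{−(d_1+d_{1r})/β_SH})/(1 − e^{−2d_{1r}/β_SH}); moreover, with Δα = (α_1 − ρ, α_r), the quadratic form satisfies σ_Δm² := Δαᵀ·Σ·Δα = σ_SH²·(e^{−d_r/β_SH}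 − e^{−(d_1+d_{1r})/β_SH})²/(1 − e^{−2d_{1r}/β_SH}). -/
open Real Matrix

/-- In the three-point analysis, the coefficient vector `α = Σ⁻¹ c` of
the conditional mean has the stated closed form, and the quadratic form
`Δαᵀ Σ Δα` (with `Δα = (α₁ − ρ, α_r)`) equals
`σ_SH² (e^{−d_r/β} − e^{−(d₁+d_{1r})/β})² / (1 − e^{−2d_{1r}/β})`. -/
theorem stmt_11 (βSH σSH d1 dr d1r : ℝ)
    (hβ : 0 < βSH) (hσ : 0 < σSH) (hd1 : 0 < d1) (hdr : 0 < dr) (hd1r : 0 < d1r)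
    (ρ : ℝ) (hρ : ρ = Real.exp (-d1 / βSH))
    (Sig : Matrix (Fin 2) (Fin 2) ℝ)
    (hSig : Sig = !![σSH ^ 2, σSH ^ 2 * Real.exp (-d1r / βSH);
                  σSH ^ 2 * Real.exp (-d1r / βSH), σSH ^ 2])
    (c : Fin 2 → ℝ)
    (hc : c = ![σSH ^ 2 * Real.exp (-d1 / βSH), σSH ^ 2 * Real.exp (-dr / βSH)])
    (α : Fin 2 → ℝ) (hα : α = Sig⁻¹.mulVec c)
    (Δα : Fin 2 → ℝ) (hΔα : Δα = ![α 0 - ρ, α 1]) :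
    IsUnit Sig.det ∧
    α 0 = (Real.exp (-d1 / βSH) - Real.exp (-(d1r + dr) / βSH)) /
        (1 - Real.exp (-2 * d1r / βSH)) ∧
    α 1 = (Real.exp (-dr / βSH) - Real.exp (-(d1 + d1r) / βSH)) /
        (1 - Real.exp (-2 * d1r / βSH)) ∧
    Δα ⬝ᵥ Sig.mulVec Δα =
      σSH ^ 2 * (Real.exp (-dr / βSH) - Real.exp (-(d1 + d1r) / βSH)) ^ 2 /
        (1 - Real.exp (-2 * d1r / βSH)) := by

  set x := Real.exp (-d1 / βSH) with hx
  set y := Real.exp (-dr / βSH) with hy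
  set z := Real.exp (-d1r / βSH) with hz
  have hzpos : 0 < z := Real.exp_pos _
  have hz1 : z < 1 := by
    rw [hz]
    have : -d1r / βSH < 0 := div_neg_of_neg_of_pos (by linarith) hβ
    calc Real.exp (-d1r / βSH) < Real.exp 0 := Real.exp_lt_exp.2 this
      _ = 1 := Real.exp_zero
  have hσ2 : σSH ^ 2 ≠ 0 := by positivity
  have hden : 1 - z ^ 2 ≠ 0 := by nlinarith
  have e1 : Real.exp (-(d1r + dr) / βSH) = z * y := by
    rw [show -(d1r + dr) / βSH = -d1r / βSH + -dr / βSH by ring, Real.exp_add]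
  have e2 : Real.exp (-(d1 + d1r) / βSH) = x * z := by
    rw [show -(d1 + d1r) / βSH = -d1 / βSH + -d1r / βSH by ring, Real.exp_add]
  have e3 : Real.exp (-2 * d1r / βSH) = z ^ 2 := by
    rw [show -2 * d1r / βSH = -d1r / βSH + -d1r / βSH by ring, Real.exp_add]; ring
  have hdet : Sig.det = σSH ^ 2 * σSH ^ 2 * (1 - z ^ 2) := by
    rw [hSig, Matrix.det_fin_two_of]; ring
  have hunit : IsUnit Sig.det := by
    rw [hdet]; exact (mul_ne_zero (mul_ne_zero hσ2 hσ2) hden).isUnit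
  have hdet0 : Sig.det ≠ 0 := hunit.ne_zero
  have hinv : Sig⁻¹ = Sig.det⁻¹ • !![σSH ^ 2, -(σSH ^ 2 * z);
      -(σSH ^ 2 * z), σSH ^ 2] := by
    rw [Matrix.inv_def, Ring.inverse_eq_inv', hSig, Matrix.adjugate_fin_two_of, ← hSig]
  have hα0 : α 0 = (x - z * y) / (1 - z ^ 2) := by
    rw [hα, hinv, hc]
    simp [Matrix.mulVec, dotProduct, hdet]
    field_simp
    ring
  have hα1 : α 1 = (y - x * z) / (1 - z ^ 2) := by
    rw [hα, hinv, hc]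
    simp [Matrix.mulVec, dotProduct, hdet]
    field_simp
    ring
  refine ⟨hunit, by rw [e1, e3, hα0], by rw [e2, e3, hα1], ?_⟩
  rw [e2, e3]
  have hΔ0 : Δα 0 = (x - z * y) / (1 - z ^ 2) - x := by
    rw [hΔα]; simp [hα0, hρ, hx]
  have hΔ1 : Δα 1 = (y - x * z) / (1 - z ^ 2) := by rw [hΔα]; simp [hα1]
  rw [hΔα] at hΔ0 hΔ1 ⊢
  rw [hSig]
  simp only [Matrix.mulVec, dotProduct]
  simp only [Fin.sum_univ_two, Matrix.cons_val', Matrix.cons_val_zero, Matrix.cons_val_one,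
    Matrix.head_cons, Matrix.of_apply, Matrix.cons_val_fin_one, Matrix.head_fin_const] at hΔ0 hΔ1 ⊢
  rw [hΔ0, hΔ1]
  field_simp
  ring
end

section
/- Let β_SH, σ_SH > 0 and d_1, d_r, d_{1r} > 0, and set ρ = e^{−d_1/β_SH}. Let Σ be the 2×2 matrix with diagonal entries σ_SH² and off-diagonal entries σ_SH²·e^{−d_{1r}/β_SH}, and let c = (σ_SH²·e^{−d_1/β_SH}, σ_SH²·e^{−d_r/β_SH}). Then the conditional variance σ² := σ_SH² − cᵀ·Σ⁻¹·c satisfies σ²/σ_SH² = 1 − (e^{−2d_1/β_SH} + e^{−2d_r/β_SH} − 2e^{−(d_1+d_r+d_{1r})/β_SH})/(1 − e^{−2d_{1r}/β_SH}); moreover, with σ̂² = σ_SH²(1 − ρ²) and σ_Δm² = σ_SH²·(e^{−d_r/β_SH} − e^{−(d_1+d_{1r})/β_SH})²/(1 − e^{−2d_{1r}/β_SH}), one has the identity σ̂² − σ² = σ_Δm². -/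
open Real Matrix

/-- In the three-point analysis, the conditional variance
`σ² = σ_SH² − cᵀ Σ⁻¹ c` satisfies the stated closed form, and
`σ̂² − σ² = σ_Δm²` where `σ̂² = σ_SH²(1 − ρ²)` is the variance of the Markov
approximation and `σ_Δm²` the variance of the difference of conditional means. -/
theorem stmt_12 (βSH σSH d1 dr d1r : ℝ)
    (hβ : 0 < βSH) (hσ : 0 < σSH) (hd1 : 0 < d1) (hdr : 0 < dr) (hd1r : 0 < d1r)
    (ρ : ℝ) (hρ : ρ = Real.exp (-d1 / βSH))
    (Sig : Matrix (Fin 2) (Fin 2) ℝ)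
    (hSig : Sig = !![σSH ^ 2, σSH ^ 2 * Real.exp (-d1r / βSH);
                     σSH ^ 2 * Real.exp (-d1r / βSH), σSH ^ 2])
    (c : Fin 2 → ℝ)
    (hc : c = ![σSH ^ 2 * Real.exp (-d1 / βSH), σSH ^ 2 * Real.exp (-dr / βSH)])
    (σ2 : ℝ) (hσ2 : σ2 = σSH ^ 2 - c ⬝ᵥ Sig⁻¹.mulVec c)
    (σhat2 : ℝ) (hσhat2 : σhat2 = σSH ^ 2 * (1 - ρ ^ 2))
    (σΔm2 : ℝ)
    (hσΔm2 : σΔm2 =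
      σSH ^ 2 * (Real.exp (-dr / βSH) - Real.exp (-(d1 + d1r) / βSH)) ^ 2 /
        (1 - Real.exp (-2 * d1r / βSH))) :
    σ2 / σSH ^ 2 =
      1 - (Real.exp (-2 * d1 / βSH) + Real.exp (-2 * dr / βSH) -
            2 * Real.exp (-(d1 + dr + d1r) / βSH)) /
          (1 - Real.exp (-2 * d1r / βSH)) ∧
    σhat2 - σ2 = σΔm2 := by
  set E1 := Real.exp (-d1 / βSH) with hE1
  set Er := Real.exp (-dr / βSH) with hEr
  set E1r := Real.exp (-d1r / βSH) with hE1r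
  have hE1r_pos : 0 < E1r := Real.exp_pos _
  have hE1r_lt : E1r < 1 := by
    rw [hE1r, Real.exp_lt_one_iff]
    exact div_neg_of_neg_of_pos (by linarith) hβ
  have hden : (1 : ℝ) - E1r ^ 2 ≠ 0 := by nlinarith
  have hσ2ne : σSH ^ 2 ≠ 0 := by positivity
  have hk : σSH ^ 2 * (1 - E1r ^ 2) ≠ 0 := mul_ne_zero hσ2ne hden
  -- rewrite the exp's in the goal in terms of E1, Er, E1r
  have h2d1 : Real.exp (-2 * d1 / βSH) = E1 ^ 2 := by
    rw [hE1, ← Real.exp_nat_mul]; ring_nf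
  have h2dr : Real.exp (-2 * dr / βSH) = Er ^ 2 := by
    rw [hEr, ← Real.exp_nat_mul]; ring_nf
  have h2d1r : Real.exp (-2 * d1r / βSH) = E1r ^ 2 := by
    rw [hE1r, ← Real.exp_nat_mul]; ring_nf
  have hsum : Real.exp (-(d1 + dr + d1r) / βSH) = E1 * Er * E1r := by
    rw [hE1, hEr, hE1r, ← Real.exp_add, ← Real.exp_add]; ring_nf
  have hsum2 : Real.exp (-(d1 + d1r) / βSH) = E1 * E1r := by
    rw [hE1, hE1r, ← Real.exp_add]; ring_nf
  have hinv : Sig⁻¹ = (σSH ^ 2 * (1 - E1r ^ 2))⁻¹ • !![1, -E1r; -E1r, 1] := by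
    rw [hSig]
    apply Matrix.inv_eq_right_inv
    ext i j
    fin_cases i <;> fin_cases j <;>
      simp [Matrix.mul_apply, Fin.sum_univ_two] <;> field_simp <;> ring
  have hquad : c ⬝ᵥ Sig⁻¹.mulVec c =
      σSH ^ 2 * (E1 ^ 2 + Er ^ 2 - 2 * E1 * Er * E1r) / (1 - E1r ^ 2) := by
    rw [hinv, hc]
    simp [Matrix.mulVec, dotProduct, Fin.sum_univ_two]
    field_simp
    ring
  constructor
  · rw [hσ2, hquad, h2d1, h2dr, h2d1r, hsum]
    field_simp
  · rw [hσhat2, hσ2, hquad, hσΔm2, hρ, h2d1r, hsum2]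
    field_simp
    ring
end

section
/- Let β_SH, σ_SH > 0 and d_1, d_r, d_{1r} > 0, set ρ = e^{−d_1/β_SH}, a = e^{−d_{1r}/β_SH}, σ̂² = σ_SH²(1 − ρ²), α_1 = (e^{−d_1/β_SH} − e^{−(d_{1r}+d_r)/β_SH})/(1 − e^{−2d_{1r}/β_SH}), α_r = (e^{−d_r/β_SH} − e^{−(d_1+d_{1r})/β_SH})/(1 − e^{−2d_{1r}/β_SH}), σ_Δm² = σ_SH²·(e^{−d_r/β_SH} − e^{−(d_1+d_{1r})/β_SH})²/(1 − e^{−2d_{1r}/β_SH}), and σ² = σ̂² − σ_Δm², and assume σ_Δm² < σ̂² (so σ² > 0). Let Z_1, Z_2 be independent standard Gaussian random variables, and define the jointly Gaussian pair W_1 = σ_SH·Z_1 and W_r = σ_SH·(a·Z_1 + √(1 − a²)·Z_2). Define the Kullback–Leibler divergence random variable KL = ((α_1 − ρ)W_1 + α_r·W_r)²/(2σ̂²) + (1/2)·(σ²/σ̂² − 1 − log(σ²/σ̂²)). Then the mean of KL is E[KL] = −(1/2)·log(1 − σ_Δm²/σ̂²) and the standard deviation of KL is √(Var[KL]) = σ_Δm²/(√2·σ̂²).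 -/
open MeasureTheory ProbabilityTheory Real

open scoped ENNReal NNReal
section MyHelpers
open Set

lemma my_gauss_integrable (k : ℕ) :
    Integrable (fun x : ℝ => x ^ k * Real.exp (-(2⁻¹ : ℝ) * x ^ 2)) := by
  have h := integrable_rpow_mul_exp_neg_mul_sq (b := (2⁻¹ : ℝ)) (by norm_num)
    (s := (k : ℝ)) (lt_of_lt_of_le neg_one_lt_zero (Nat.cast_nonneg k))
  simpa [Real.rpow_natCast] using h

lemma my_gauss_int (k : ℕ) (hk : Even k) :
    ∫ x : ℝ, x ^ k * Real.exp (-(2⁻¹ : ℝ) * x ^ 2)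
      = (2⁻¹ : ℝ) ^ (-((k : ℝ) + 1) / 2) * Real.Gamma (((k : ℝ) + 1) / 2) := by
  have h1 : ∫ x : ℝ, x ^ k * Real.exp (-(2⁻¹ : ℝ) * x ^ 2)
      = 2 * ∫ x in Ioi (0 : ℝ), x ^ k * Real.exp (-(2⁻¹ : ℝ) * x ^ 2) := by
    rw [← integral_comp_abs (f := fun x => x ^ k * Real.exp (-(2⁻¹ : ℝ) * x ^ 2))]
    congr 1; ext x
    rw [hk.pow_abs, sq_abs]
  have h2 : ∫ x in Ioi (0 : ℝ), x ^ k * Real.exp (-(2⁻¹ : ℝ) * x ^ 2)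
      = (2⁻¹ : ℝ) ^ (-((k : ℝ) + 1) / 2) * (1 / 2) * Real.Gamma (((k : ℝ) + 1) / 2) := by
    rw [← integral_rpow_mul_exp_neg_mul_rpow (p := 2) (q := (k : ℝ)) (b := (2⁻¹ : ℝ))
      two_pos (lt_of_lt_of_le neg_one_lt_zero (Nat.cast_nonneg k)) (by norm_num)]
    refine setIntegral_congr_fun measurableSet_Ioi fun x _ => ?_
    rw [show ((2 : ℝ)) = ((2 : ℕ) : ℝ) by norm_num, Real.rpow_natCast, Real.rpow_natCast]
  rw [h1, h2]; ring

lemma my_sqrt_two_pi_pos : (0:ℝ) < Real.sqrt 2 * Real.sqrt π := by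
  have := Real.pi_pos; positivity

lemma my_gauss_int_two :
    ∫ x : ℝ, x ^ 2 * Real.exp (-(2⁻¹ : ℝ) * x ^ 2) = Real.sqrt 2 * Real.sqrt π := by
  rw [my_gauss_int 2 (by norm_num)]
  have hG : Real.Gamma ((((2:ℕ) : ℝ) + 1) / 2) = Real.sqrt π / 2 := by
    have h := Real.Gamma_add_one (s := 1/2) (by norm_num)
    rw [Real.Gamma_one_half_eq] at h
    norm_num at h ⊢
    linarith
  have hp : (2⁻¹ : ℝ) ^ (-(((2:ℕ) : ℝ) + 1) / 2) = 2 * Real.sqrt 2 := by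
    have h2 : (0:ℝ) < 2 := two_pos
    have : (-(((2:ℕ) : ℝ) + 1) / 2) = -((3:ℝ)/2) := by norm_num
    rw [this, Real.inv_rpow h2.le, Real.rpow_neg h2.le, inv_inv,
      show ((3:ℝ)/2) = 1 + 1/2 by norm_num, Real.rpow_add h2, Real.rpow_one,
      ← Real.sqrt_eq_rpow]
  rw [hG, hp]; ring

lemma my_gauss_int_four :
    ∫ x : ℝ, x ^ 4 * Real.exp (-(2⁻¹ : ℝ) * x ^ 2) = 3 * (Real.sqrt 2 * Real.sqrt π) := by
  rw [my_gauss_int 4 ⟨2, rfl⟩]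
  have hG32 : Real.Gamma ((3:ℝ)/2) = Real.sqrt π / 2 := by
    have h := Real.Gamma_add_one (s := 1/2) (by norm_num)
    rw [Real.Gamma_one_half_eq] at h
    norm_num at h ⊢
    linarith
  have hG : Real.Gamma ((((4:ℕ) : ℝ) + 1) / 2) = 3 * Real.sqrt π / 4 := by
    have h := Real.Gamma_add_one (s := 3/2) (by norm_num)
    rw [hG32] at h
    norm_num at h ⊢
    linarith
  have hp : (2⁻¹ : ℝ) ^ (-(((4:ℕ) : ℝ) + 1) / 2) = 4 * Real.sqrt 2 := by
    have h2 : (0:ℝ) < 2 := two_pos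
    have : (-(((4:ℕ) : ℝ) + 1) / 2) = -((5:ℝ)/2) := by norm_num
    rw [this, Real.inv_rpow h2.le, Real.rpow_neg h2.le, inv_inv,
      show ((5:ℝ)/2) = 1 + (1 + 1/2) by norm_num, Real.rpow_add h2, Real.rpow_add h2,
      Real.rpow_one, ← Real.sqrt_eq_rpow]
    ring
  rw [hG, hp]; ring

lemma my_gauss_density : gaussianReal 0 1
    = (volume : Measure ℝ).withDensity (fun x => ((gaussianPDFReal 0 1 x).toNNReal : ℝ≥0∞)) := by
  rw [gaussianReal_of_var_ne_zero 0 one_ne_zero]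
  rfl

lemma my_density_fun (k : ℕ) :
    (fun x : ℝ => (gaussianPDFReal 0 1 x).toNNReal • x ^ k)
      = fun x : ℝ => (Real.sqrt 2 * Real.sqrt π)⁻¹ * (x ^ k * Real.exp (-(2⁻¹:ℝ) * x ^ 2)) := by
  funext x
  rw [NNReal.smul_def, smul_eq_mul, Real.coe_toNNReal _ (gaussianPDFReal_nonneg _ _ _)]
  simp only [gaussianPDFReal, NNReal.coe_one, mul_one, sub_zero]
  rw [Real.sqrt_mul (by norm_num : (0:ℝ) ≤ 2)]
  rw [show -x ^ 2 / 2 = -(2⁻¹:ℝ) * x ^ 2 by ring]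
  ring

lemma my_integrable_pow_gaussianReal (k : ℕ) :
    Integrable (fun x : ℝ => x ^ k) (gaussianReal 0 1) := by
  rw [my_gauss_density,
    integrable_withDensity_iff_integrable_smul ((measurable_gaussianPDFReal 0 1).real_toNNReal)]
  rw [my_density_fun k]
  exact (my_gauss_integrable k).const_mul _

lemma my_integral_pow_gaussianReal (k : ℕ) :
    ∫ x, x ^ k ∂(gaussianReal 0 1)
      = (Real.sqrt 2 * Real.sqrt π)⁻¹ * ∫ x : ℝ, x ^ k * Real.exp (-(2⁻¹:ℝ) * x ^ 2) := by
  rw [my_gauss_density,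
    integral_withDensity_eq_integral_smul ((measurable_gaussianPDFReal 0 1).real_toNNReal)]
  rw [my_density_fun k, integral_const_mul]

lemma my_moment_two : ∫ x, x ^ 2 ∂(gaussianReal 0 1) = 1 := by
  rw [my_integral_pow_gaussianReal, my_gauss_int_two,
    inv_mul_cancel₀ (ne_of_gt my_sqrt_two_pi_pos)]

lemma my_moment_four : ∫ x, x ^ 4 ∂(gaussianReal 0 1) = 3 := by
  rw [my_integral_pow_gaussianReal, my_gauss_int_four]
  field_simp

end MyHelpers

/-- The Kullback–Leibler divergence between the true two-point
conditional distribution `N(m, σ²)` and its Markov approximation `N(m̂, σ̂²)` in the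
three-point analysis, viewed as a random variable through the jointly Gaussian pair
`(W₁, W_r)`, has mean `−(1/2) log(1 − σ_Δm²/σ̂²)` and standard deviation
`σ_Δm²/(√2 σ̂²)`. -/
theorem stmt_13
    {Ω : Type*} [MeasurableSpace Ω] (P : Measure Ω) [IsProbabilityMeasure P]
    (βSH σSH d1 dr d1r : ℝ)
    (hβ : 0 < βSH) (hσ : 0 < σSH) (hd1 : 0 < d1) (hdr : 0 < dr) (hd1r : 0 < d1r)
    (ρ a : ℝ) (hρ : ρ = Real.exp (-d1 / βSH)) (ha : a = Real.exp (-d1r / βSH))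
    (σhat2 : ℝ) (hσhat2 : σhat2 = σSH ^ 2 * (1 - ρ ^ 2))
    (α1 αr : ℝ)
    (hα1 : α1 = (Real.exp (-d1 / βSH) - Real.exp (-(d1r + dr) / βSH)) /
      (1 - Real.exp (-2 * d1r / βSH)))
    (hαr : αr = (Real.exp (-dr / βSH) - Real.exp (-(d1 + d1r) / βSH)) /
      (1 - Real.exp (-2 * d1r / βSH)))
    (σΔm2 : ℝ)
    (hσΔm2 : σΔm2 =
      σSH ^ 2 * (Real.exp (-dr / βSH) - Real.exp (-(d1 + d1r) / βSH)) ^ 2 /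
        (1 - Real.exp (-2 * d1r / βSH)))
    (σ2 : ℝ) (hσ2 : σ2 = σhat2 - σΔm2) (hpos : σΔm2 < σhat2)
    -- independent standard Gaussians
    (Z1 Z2 : Ω → ℝ) (hZ1meas : Measurable Z1) (hZ2meas : Measurable Z2)
    (hindep : IndepFun Z1 Z2 P)
    (hZ1law : Measure.map Z1 P = gaussianReal 0 1)
    (hZ2law : Measure.map Z2 P = gaussianReal 0 1)
    -- the jointly Gaussian pair
    (W1 Wr : Ω → ℝ)
    (hW1 : ∀ ω, W1 ω = σSH * Z1 ω)
    (hWr : ∀ ω, Wr ω = σSH * (a * Z1 ω + Real.sqrt (1 - a ^ 2) * Z2 ω))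
    -- the KL divergence random variable
    (KL : Ω → ℝ)
    (hKL : ∀ ω, KL ω =
      ((α1 - ρ) * W1 ω + αr * Wr ω) ^ 2 / (2 * σhat2) +
        (1 / 2) * (σ2 / σhat2 - 1 - Real.log (σ2 / σhat2))) :
    (∫ ω, KL ω ∂P = -(1 / 2) * Real.log (1 - σΔm2 / σhat2)) ∧
    Real.sqrt (variance KL P) = σΔm2 / (Real.sqrt 2 * σhat2) := by
  -- basic positivity facts
  have ha_pos : 0 < a := by rw [ha]; exact Real.exp_pos _
  have ha_lt : a < 1 := by
    rw [ha]; exact Real.exp_lt_one_iff.mpr (div_neg_of_neg_of_pos (by linarith) hβ)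
  have hρ_pos : 0 < ρ := by rw [hρ]; exact Real.exp_pos _
  have hρ_lt : ρ < 1 := by
    rw [hρ]; exact Real.exp_lt_one_iff.mpr (div_neg_of_neg_of_pos (by linarith) hβ)
  have h1a2 : 0 < 1 - a ^ 2 := by nlinarith
  have hσhat_pos : 0 < σhat2 := by
    rw [hσhat2]; have h : 0 < 1 - ρ ^ 2 := by nlinarith
    positivity
  -- exponential splitting identities
  have hsplit1 : Real.exp (-(d1r + dr) / βSH)
      = Real.exp (-d1r / βSH) * Real.exp (-dr / βSH) := by
    rw [← Real.exp_add]; congr 1; ring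
  have hsplit2 : Real.exp (-(d1 + d1r) / βSH)
      = Real.exp (-d1 / βSH) * Real.exp (-d1r / βSH) := by
    rw [← Real.exp_add]; congr 1; ring
  have hexp2 : Real.exp (-2 * d1r / βSH) = Real.exp (-d1r / βSH) ^ 2 := by
    rw [← Real.exp_nat_mul]; congr 1; push_cast; ring
  have hden : (1 : ℝ) - Real.exp (-d1r / βSH) ^ 2 ≠ 0 := by
    rw [← ha]; exact ne_of_gt h1a2
  -- key algebraic identities
  have key1 : α1 - ρ + αr * a = 0 := by
    rw [hα1, hαr, hρ, ha, hsplit1, hsplit2, hexp2]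
    field_simp
    have hden' : (1 : ℝ) - Real.exp (-(d1r / βSH)) ^ 2 ≠ 0 := by
      rw [show -(d1r / βSH) = -d1r / βSH by ring]; exact hden
    have hinv : (1 - Real.exp (-(d1r / βSH)) ^ 2)⁻¹ * (1 - Real.exp (-(d1r / βSH)) ^ 2) = 1 :=
      inv_mul_cancel₀ hden'
    linear_combination Real.exp (-(d1 / βSH)) * hinv
  have key2 : σSH ^ 2 * αr ^ 2 * (1 - a ^ 2) = σΔm2 := by
    rw [hαr, ha, hσΔm2, hsplit2, hexp2]
    field_simp
  have hΔ_nonneg : 0 ≤ σΔm2 := by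
    rw [← key2]
    exact mul_nonneg (mul_nonneg (sq_nonneg _) (sq_nonneg _)) h1a2.le
  set c : ℝ := σΔm2 / (2 * σhat2) with hc
  set K : ℝ := (1 / 2) * (σ2 / σhat2 - 1 - Real.log (σ2 / σhat2)) with hKdef
  have hs2 : Real.sqrt (1 - a ^ 2) ^ 2 = 1 - a ^ 2 := Real.sq_sqrt h1a2.le
  -- reduce KL to c * Z2² + K
  have hKL' : KL = fun ω => c * Z2 ω ^ 2 + K := by
    funext ω
    rw [hKL ω, hW1 ω, hWr ω]
    have hY : (α1 - ρ) * (σSH * Z1 ω)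
        + αr * (σSH * (a * Z1 ω + Real.sqrt (1 - a ^ 2) * Z2 ω))
        = σSH * (αr * Real.sqrt (1 - a ^ 2)) * Z2 ω := by
      linear_combination (σSH * Z1 ω) * key1
    rw [hY]
    have hsq : (σSH * (αr * Real.sqrt (1 - a ^ 2)) * Z2 ω) ^ 2 = σΔm2 * Z2 ω ^ 2 := by
      rw [← key2, mul_pow, mul_pow, mul_pow, hs2]; ring
    rw [hsq, hc]
    field_simp
  rw [hKL']
  -- moments of Z2
  have hI2 : Integrable (fun ω => Z2 ω ^ 2) P := by
    have h := my_integrable_pow_gaussianReal 2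
    rw [← hZ2law] at h
    exact (integrable_map_measure
      (measurable_id.pow_const 2).aestronglyMeasurable hZ2meas.aemeasurable).mp h
  have hI4 : Integrable (fun ω => Z2 ω ^ 4) P := by
    have h := my_integrable_pow_gaussianReal 4
    rw [← hZ2law] at h
    exact (integrable_map_measure
      (measurable_id.pow_const 4).aestronglyMeasurable hZ2meas.aemeasurable).mp h
  have hmap2 : ∫ ω, Z2 ω ^ 2 ∂P = 1 := by
    have h := integral_map (φ := Z2) (f := fun x : ℝ => x ^ 2) hZ2meas.aemeasurable
      (by rw [hZ2law]; exact (measurable_id.pow_const 2).aestronglyMeasurable)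
    rw [hZ2law, my_moment_two] at h
    exact h.symm
  have hmap4 : ∫ ω, Z2 ω ^ 4 ∂P = 3 := by
    have h := integral_map (φ := Z2) (f := fun x : ℝ => x ^ 4) hZ2meas.aemeasurable
      (by rw [hZ2law]; exact (measurable_id.pow_const 4).aestronglyMeasurable)
    rw [hZ2law, my_moment_four] at h
    exact h.symm
  have hmean : ∫ ω, (c * Z2 ω ^ 2 + K) ∂P = c + K := by
    rw [integral_add (hI2.const_mul c) (integrable_const K), integral_const_mul, hmap2,
      integral_const]
    simp
  refine ⟨?_, ?_⟩
  · rw [hmean]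
    have hratio : σ2 / σhat2 = 1 - σΔm2 / σhat2 := by
      rw [hσ2]; field_simp
    rw [hKdef, hratio, hc]
    field_simp
    ring
  · -- variance computation
    have hmemZ : MemLp (fun ω => Z2 ω ^ 2) 2 P := by
      rw [memLp_two_iff_integrable_sq (hZ2meas.pow_const 2).aestronglyMeasurable]
      have : (fun ω => (Z2 ω ^ 2) ^ 2) = fun ω => Z2 ω ^ 4 := by
        funext ω; ring
      rwa [this]
    have hmem : MemLp (fun ω => c * Z2 ω ^ 2 + K) 2 P :=
      (hmemZ.const_mul c).add (memLp_const K)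
    rw [variance_eq_sub hmem]
    have h2nd : ∫ ω, (c * Z2 ω ^ 2 + K) ^ 2 ∂P
        = c ^ 2 * 3 + 2 * c * K + K ^ 2 := by
      have hfun : ∀ ω : Ω, (c * Z2 ω ^ 2 + K) ^ 2
          = c ^ 2 * Z2 ω ^ 4 + (2 * c * K * Z2 ω ^ 2 + K ^ 2) := fun ω => by ring
      simp_rw [hfun]
      rw [integral_add (hI4.const_mul _)
          (show Integrable (fun ω => 2 * c * K * Z2 ω ^ 2 + K ^ 2) P from
            (hI2.const_mul _).add (integrable_const _)),
        integral_add (hI2.const_mul _) (integrable_const _),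
        integral_const_mul, integral_const_mul, hmap2, hmap4, integral_const]
      simp
      ring
    simp only [Pi.pow_apply]
    rw [h2nd, hmean]
    have hvar : c ^ 2 * 3 + 2 * c * K + K ^ 2 - (c + K) ^ 2 = 2 * c ^ 2 := by ring
    rw [hvar]
    have hc_nonneg : 0 ≤ c := div_nonneg hΔ_nonneg (by linarith)
    have hsqrt2 : (0:ℝ) < Real.sqrt 2 := Real.sqrt_pos.mpr (by norm_num)
    rw [show (2:ℝ) * c ^ 2 = (Real.sqrt 2 * c) ^ 2 by
        rw [mul_pow, Real.sq_sqrt (by norm_num : (0:ℝ) ≤ 2)],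
      Real.sqrt_sq (by positivity)]
    have h22 : Real.sqrt 2 * Real.sqrt 2 = 2 := Real.mul_self_sqrt (by norm_num)
    rw [hc]
    field_simp
    linear_combination σΔm2 * h22
end

section
/- (a) For any z_l ≥ 0, the function h(z) = (1 − e^{−(z − z_l)})²/(1 − e^{−2z}) is strictly increasing on (z_l, ∞). (b) Consequently, for β_SH, σ_SH > 0 and 0 < d_1 < d_r, the function σ_Δm²(d_{1r}) = σ_SH²·(e^{−d_r/β_SH} − e^{−(d_1+d_{1r})/β_SH})²/(1 − e^{−2d_{1r}/β_SH}) attains its maximum over d_{1r} ∈ [d_r − d_1, d_r + d_1] at d_{1r} = d_r + d_1, where it equals σ_SH²·e^{−2d_r/β_SH}·(1 − ρ²)²/(1 − ρ²·e^{−2d_r/β_SH}) with ρ = e^{−d_1/β_SH}. -/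
open Real

lemma stmt14_key (zl : ℝ) (hzl : 0 ≤ zl) :
    StrictMonoOn (fun z => (1 - Real.exp (-(z - zl))) ^ 2 / (1 - Real.exp (-2 * z)))
      (Set.Ioi zl) := by
  have hden : ∀ z ∈ Set.Ioi zl, Real.exp (-2 * z) < 1 := by
    intro z hz
    have hz0 : 0 < z := lt_of_le_of_lt hzl hz
    rw [Real.exp_lt_one_iff]; linarith
  apply strictMonoOn_of_deriv_pos (convex_Ioi zl)
  · apply ContinuousOn.div
    · fun_prop
    · fun_prop
    · intro z hz
      exact sub_ne_zero.mpr (hden z hz).ne'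
  · intro z hz
    rw [interior_Ioi] at hz
    have hzz : zl < z := hz
    have hz0 : 0 < z := lt_of_le_of_lt hzl hzz
    have hb : Real.exp (-(z - zl)) < 1 := by
      rw [Real.exp_lt_one_iff]; linarith
    have ha : Real.exp (-2 * z) < 1 := by
      rw [Real.exp_lt_one_iff]; linarith
    have hba : Real.exp (-2 * z) < Real.exp (-(z - zl)) := by
      apply Real.exp_lt_exp.mpr; linarith
    have hbpos : 0 < Real.exp (-(z - zl)) := Real.exp_pos _
    have hapos : 0 < Real.exp (-2 * z) := Real.exp_pos _
    -- build derivative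
    have h1 : HasDerivAt (fun z : ℝ => -(z - zl)) (-1) z := by
      exact ((hasDerivAt_id z).sub_const zl).neg
    have h2 : HasDerivAt (fun z : ℝ => Real.exp (-(z - zl)))
        (Real.exp (-(z - zl)) * (-1)) z := h1.exp
    have h3 : HasDerivAt (fun z : ℝ => 1 - Real.exp (-(z - zl)))
        (-(Real.exp (-(z - zl)) * (-1))) z := h2.const_sub 1
    have h4 : HasDerivAt (fun z : ℝ => (1 - Real.exp (-(z - zl))) ^ 2)
        (2 * (1 - Real.exp (-(z - zl))) ^ 1 * -(Real.exp (-(z - zl)) * (-1))) z := by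
      have h4' : HasDerivAt (fun z : ℝ => (1 - Real.exp (-(z - zl))) ^ 2) _ z := h3.pow 2; simpa using h4'
    have h5 : HasDerivAt (fun z : ℝ => -2 * z) (-2) z := by
      simpa using (hasDerivAt_id z).const_mul (-2)
    have h6 : HasDerivAt (fun z : ℝ => Real.exp (-2 * z))
        (Real.exp (-2 * z) * (-2)) z := h5.exp
    have h7 : HasDerivAt (fun z : ℝ => 1 - Real.exp (-2 * z))
        (-(Real.exp (-2 * z) * (-2))) z := h6.const_sub 1
    have hdne : 1 - Real.exp (-2 * z) ≠ 0 := sub_ne_zero.mpr ha.ne'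
    have h8 := h4.div h7 hdne
    have h8' : HasDerivAt (fun z : ℝ => (1 - Real.exp (-(z - zl))) ^ 2 / (1 - Real.exp (-2 * z))) _ z := h8; rw [h8'.deriv]
    apply div_pos
    · nlinarith [sq_nonneg (1 - Real.exp (-(z - zl)))]
    · positivity

lemma stmt14_fact (βSH σSH d1 dr : ℝ) (hβ : 0 < βSH) (d1r : ℝ) :
    σSH ^ 2 * (Real.exp (-dr / βSH) - Real.exp (-(d1 + d1r) / βSH)) ^ 2 /
        (1 - Real.exp (-2 * d1r / βSH)) =
      σSH ^ 2 * Real.exp (-2 * dr / βSH) *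
        ((1 - Real.exp (-(d1r / βSH - (dr - d1) / βSH))) ^ 2 /
          (1 - Real.exp (-2 * (d1r / βSH)))) := by
  have hβ' := hβ.ne'
  have e1 : Real.exp (-(d1 + d1r) / βSH) =
      Real.exp (-dr / βSH) * Real.exp (-(d1r / βSH - (dr - d1) / βSH)) := by
    rw [← Real.exp_add]; congr 1; field_simp; ring
  have e2 : Real.exp (-2 * d1r / βSH) = Real.exp (-2 * (d1r / βSH)) := by
    congr 1; ring
  have e3 : Real.exp (-2 * dr / βSH) = Real.exp (-dr / βSH) ^ 2 := by
    rw [sq, ← Real.exp_add]; congr 1; field_simp; ring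
  rw [e1, e2, e3]; ring

/-- (a) For `z_l ≥ 0`, the function
`h(z) = (1 − e^{−(z−z_l)})²/(1 − e^{−2z})` is strictly increasing on `(z_l, ∞)`.
(b) Consequently, for `0 < d₁ < d_r`, the mean-difference variance
`σ_Δm²(d_{1r})` attains its maximum over `d_{1r} ∈ [d_r − d₁, d_r + d₁]` at
`d_{1r} = d_r + d₁`, where it equals
`σ_SH² e^{−2d_r/β}(1 − ρ²)²/(1 − ρ² e^{−2d_r/β})` with `ρ = e^{−d₁/β}`. -/
theorem stmt_14 (zl : ℝ) (hzl : 0 ≤ zl)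
    (βSH σSH d1 dr : ℝ) (hβ : 0 < βSH) (hσ : 0 < σSH)
    (hd1 : 0 < d1) (hd1dr : d1 < dr)
    (h : ℝ → ℝ)
    (hh : ∀ z, h z = (1 - Real.exp (-(z - zl))) ^ 2 / (1 - Real.exp (-2 * z)))
    (σΔm2 : ℝ → ℝ)
    (hσΔm2 : ∀ d1r, σΔm2 d1r =
      σSH ^ 2 * (Real.exp (-dr / βSH) - Real.exp (-(d1 + d1r) / βSH)) ^ 2 /
        (1 - Real.exp (-2 * d1r / βSH)))
    (ρ : ℝ) (hρ : ρ = Real.exp (-d1 / βSH)) :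
    StrictMonoOn h (Set.Ioi zl) ∧
    (∀ d1r ∈ Set.Icc (dr - d1) (dr + d1), σΔm2 d1r ≤ σΔm2 (dr + d1)) ∧
    σΔm2 (dr + d1) =
      σSH ^ 2 * Real.exp (-2 * dr / βSH) * (1 - ρ ^ 2) ^ 2 /
        (1 - ρ ^ 2 * Real.exp (-2 * dr / βSH)) := by
  have hβ' := hβ.ne'
  have hzl' : (0:ℝ) ≤ (dr - d1) / βSH := div_nonneg (by linarith) hβ.le
  refine ⟨?_, ?_, ?_⟩
  · have := stmt14_key zl hzl
    intro a ha b hb hab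
    rw [hh a, hh b]
    exact this ha hb hab
  · intro d1r hd1r
    obtain ⟨hlo, hhi⟩ := hd1r
    have hfact := fun x => stmt14_fact βSH σSH d1 dr hβ x
    rw [hσΔm2 d1r, hσΔm2 (dr + d1), hfact d1r, hfact (dr + d1)]
    have hEnn : 0 ≤ σSH ^ 2 * Real.exp (-2 * dr / βSH) := by positivity
    have hmem2 : (dr + d1) / βSH ∈ Set.Ioi ((dr - d1) / βSH) := by
      simp only [Set.mem_Ioi]
      gcongr <;> linarith
    rcases eq_or_lt_of_le hlo with heq | hlt
    · -- left endpoint: value is 0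
      have : (1 - Real.exp (-(d1r / βSH - (dr - d1) / βSH))) = 0 := by
        rw [← heq]; simp
      rw [this]
      rw [zero_pow (by norm_num), zero_div, mul_zero]
      have hden2 : 0 < 1 - Real.exp (-2 * ((dr + d1) / βSH)) := by
        have : Real.exp (-2 * ((dr + d1) / βSH)) < 1 := by
          rw [Real.exp_lt_one_iff]
          have : 0 < (dr + d1) / βSH := div_pos (by linarith) hβ
          linarith
        linarith
      have : (0:ℝ) ≤ (1 - Real.exp (-((dr + d1) / βSH - (dr - d1) / βSH))) ^ 2 /
          (1 - Real.exp (-2 * ((dr + d1) / βSH))) :=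
        div_nonneg (sq_nonneg _) hden2.le
      exact mul_nonneg hEnn this
    · apply mul_le_mul_of_nonneg_left _ hEnn
      have hmono := (stmt14_key ((dr - d1) / βSH) hzl').monotoneOn
      have hmem1 : d1r / βSH ∈ Set.Ioi ((dr - d1) / βSH) := by
        simp only [Set.mem_Ioi]
        gcongr <;> linarith
      have hle : d1r / βSH ≤ (dr + d1) / βSH := by gcongr ?_ / βSH
      exact hmono hmem1 hmem2 hle
  · rw [hσΔm2, hρ]
    have p1 : Real.exp (-(d1 + (dr + d1)) / βSH) =
        Real.exp (-d1 / βSH) ^ 2 * Real.exp (-dr / βSH) := by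
      rw [sq, mul_assoc, ← Real.exp_add, ← Real.exp_add]; congr 1; field_simp; ring
    have p2 : Real.exp (-2 * (dr + d1) / βSH) =
        Real.exp (-d1 / βSH) ^ 2 * Real.exp (-2 * dr / βSH) := by
      rw [sq, mul_assoc, ← Real.exp_add, ← Real.exp_add]; congr 1; field_simp; ring
    have p3 : Real.exp (-2 * dr / βSH) = Real.exp (-dr / βSH) ^ 2 := by
      rw [sq, ← Real.exp_add]; congr 1; field_simp; ring
    rw [p1, p2, p3]
    ring
end

section
/- Let β_SH > 0, ρ ∈ (0,1), and ε_d ∈ (0,1). Then for every d_r > 0, the inequality e^{−2 d_r/β_SH}·(1 − ρ²)/(1 − ρ²·e^{−2 d_r/β_SH}) ≤ ε_d holds if and only if d_r ≥ (β_SH/2)·log(ρ² + (1 − ρ²)/ε_d). In particular, d_th = (β_SH/2)·log(ρ² + (1 − ρ²)/ε_d) is the minimum ball radius such that every point at distance at least d_th from the current point contributes a normalized mean-difference variance σ_Δm²/σ̂² at most ε_d in the worst case. -/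
open Real

/-- For `β_SH > 0`, `ρ ∈ (0,1)` and `ε_d ∈ (0,1)`, the worst-case
normalized mean-difference variance at distance `d_r > 0` satisfies
`e^{−2d_r/β}(1 − ρ²)/(1 − ρ² e^{−2d_r/β}) ≤ ε_d` if and only if
`d_r ≥ (β/2) log(ρ² + (1 − ρ²)/ε_d)`; the right-hand side is the minimum ball radius. -/
theorem stmt_15 (βSH ρ εd : ℝ) (hβ : 0 < βSH)
    (hρ : ρ ∈ Set.Ioo (0 : ℝ) 1) (hεd : εd ∈ Set.Ioo (0 : ℝ) 1)
    (dr : ℝ) (hdr : 0 < dr) :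
    Real.exp (-2 * dr / βSH) * (1 - ρ ^ 2) /
        (1 - ρ ^ 2 * Real.exp (-2 * dr / βSH)) ≤ εd ↔
      (βSH / 2) * Real.log (ρ ^ 2 + (1 - ρ ^ 2) / εd) ≤ dr := by
  obtain ⟨hρ0, hρ1⟩ := hρ
  obtain ⟨hε0, hε1⟩ := hεd
  set e := Real.exp (-2 * dr / βSH) with he
  have hepos : 0 < e := Real.exp_pos _
  have he1 : e < 1 := by
    rw [he, Real.exp_lt_one_iff]
    have h2 : -2 * dr / βSH = -(2 * dr / βSH) := by ring
    have h3 : 0 < 2 * dr / βSH := by positivity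
    linarith
  have hρsq : ρ ^ 2 < 1 := by nlinarith
  have hden : 0 < 1 - ρ ^ 2 * e := by nlinarith
  have hA : 0 < ρ ^ 2 + (1 - ρ ^ 2) / εd :=
    add_pos (pow_pos hρ0 2) (div_pos (by nlinarith) hε0)
  have hinv : Real.exp (2 * dr / βSH) = 1 / e := by
    rw [he, eq_div_iff (Real.exp_ne_zero _), ← Real.exp_add,
      show 2 * dr / βSH + -2 * dr / βSH = 0 by ring, Real.exp_zero]
  have hkey : e * (1 - ρ ^ 2) ≤ εd * (1 - ρ ^ 2 * e) ↔
      ρ ^ 2 + (1 - ρ ^ 2) / εd ≤ 1 / e := by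
    have hAe : (ρ ^ 2 + (1 - ρ ^ 2) / εd) * e * εd = (ρ ^ 2 * εd + (1 - ρ ^ 2)) * e := by
      field_simp
    rw [le_div_iff₀ hepos]
    constructor
    · intro h
      have h2 : (ρ ^ 2 + (1 - ρ ^ 2) / εd) * e * εd ≤ 1 * εd := by
        rw [hAe, one_mul]; nlinarith
      exact le_of_mul_le_mul_right h2 hε0
    · intro h
      have h2 := mul_le_mul_of_nonneg_right h hε0.le
      rw [hAe, one_mul] at h2
      nlinarith
  rw [div_le_iff₀ hden, hkey, ← hinv, ← Real.log_le_iff_le_exp hA]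
  rw [div_mul_eq_mul_div, div_le_iff₀ (by norm_num : (0:ℝ) < 2),
    le_div_iff₀ hβ] at *
  constructor
  · intro h; nlinarith [h]
  · intro h; nlinarith [h]
end

section
/- Let (Z_k)_{k∈ℕ} be i.i.d. standard Gaussian random variables and (M_k)_{k∈ℕ} be i.i.d. real random variables with common law ν whose cumulative distribution function F(t) = ν((−∞, t]) is continuous, with the two families (Z_k) and (M_k) independent of each other. Let σ_SH, β_SH, Δd > 0, ρ = e^{−Δd/β_SH}, let (g_k)_{k∈ℕ} be a sequence of real numbers and c ∈ ℝ. Define the shadowing process S_0 = σ_SH·Z_0, S_{k+1} = ρ·S_k + σ_SH·√(1 − ρ²)·Z_{k+1}, and the channel power Γ_k = g_k + S_k + M_k. Define functions J_k : ℝ → ℝ recursively by J_0(x) = F(c − g_0 − x)·φ_{σ_SH²}(x) and J_{k+1}(x) = F(c − g_{k+1} − x)·∫_ℝ φ_{σ_SH²(1−ρ²)}(x − ρ u)·J_k(u) du, where φ_v(t) = (2πv)^{−1/2}·e^{−t²/(2v)} is the centered Gaussian density with variance v. Then for every N ∈ ℕ, the probability that connectivity fails at all of the first N+1 steps equals P(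 Γ_k < c for all k ∈ {0, 1, …, N} ) = ∫_ℝ J_N(x) dx. -/
open MeasureTheory ProbabilityTheory Real
open scoped NNReal ENNReal

noncomputable def indLT (a b : ℝ) : ℝ := if a < b then 1 else 0

lemma indLT_apply (a b : ℝ) : indLT a b = (Set.Iio b).indicator (fun _ => (1:ℝ)) a := by
  simp [indLT, Set.indicator, Set.mem_Iio]

lemma measurable_indLT : Measurable (fun p : ℝ × ℝ => indLT p.1 p.2) := by
  unfold indLT
  exact Measurable.ite (measurableSet_lt measurable_fst measurable_snd)
    measurable_const measurable_const

lemma indLT_nonneg (a b : ℝ) : 0 ≤ indLT a b := by unfold indLT; split <;> norm_num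

lemma indLT_le_one (a b : ℝ) : indLT a b ≤ 1 := by unfold indLT; split <;> norm_num

noncomputable def sfun (σ ρ τ : ℝ) : ℕ → (ℕ → ℝ) → ℝ
  | 0 => fun z => σ * z 0
  | (k+1) => fun z => ρ * sfun σ ρ τ k z + τ * z (k+1)

lemma sfun_measurable (σ ρ τ : ℝ) (k : ℕ) : Measurable (sfun σ ρ τ k) := by
  induction k with
  | zero => exact show Measurable fun z : ℕ → ℝ => σ * z 0 from (show Measurable fun z : ℕ → ℝ => z 0 from measurable_pi_apply 0).const_mul σ
  | succ k ih => exact show Measurable fun z : ℕ → ℝ => ρ * sfun σ ρ τ k z + τ * z (k+1) from (ih.const_mul ρ).add ((show Measurable fun z : ℕ → ℝ => z (k+1) from measurable_pi_apply (k+1)).const_mul τ)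

lemma sfun_congr (σ ρ τ : ℝ) (k : ℕ) {z z' : ℕ → ℝ} (h : ∀ i ≤ k, z i = z' i) :
    sfun σ ρ τ k z = sfun σ ρ τ k z' := by
  induction k with
  | zero => simp [sfun, h 0 le_rfl]
  | succ k ih =>
      simp [sfun, ih (fun i hi => h i (hi.trans (Nat.le_succ k))), h (k+1) le_rfl]

lemma integrable_of_bounded'' {α : Type*} [MeasurableSpace α] {μ : Measure α} [IsFiniteMeasure μ]
    {f : α → ℝ} (hm : AEStronglyMeasurable f μ) {C : ℝ} (h : ∀ x, |f x| ≤ C) :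
    Integrable f μ :=
  ⟨hm, HasFiniteIntegral.of_bounded (C := C) (ae_of_all μ (by simpa [Real.norm_eq_abs] using h))⟩

lemma integral_gaussianReal_pdf_mul (m : ℝ) {v : ℝ≥0} (hv : v ≠ 0) (q : ℝ → ℝ) :
    ∫ x, q x ∂(gaussianReal m v) = ∫ x, gaussianPDFReal m v x * q x := by
  rw [gaussianReal_of_var_ne_zero _ hv]
  have h1 : (gaussianPDF m v) = fun x => ((gaussianPDFReal m v x).toNNReal : ℝ≥0∞) := by
    funext x; rfl
  rw [h1, integral_withDensity_eq_integral_smul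
    ((measurable_gaussianPDFReal m v).real_toNNReal) q]
  congr 1; funext x
  rw [NNReal.smul_def, smul_eq_mul, Real.coe_toNNReal _ (gaussianPDFReal_nonneg m v x)]

lemma conv_integrable {v : ℝ≥0} (hv : v ≠ 0) (ρ : ℝ) {w : ℝ → ℝ} (hwm : Measurable w)
    (hw0 : ∀ u, 0 ≤ w u) (hwi : Integrable w (volume : Measure ℝ)) :
    Integrable (fun p : ℝ × ℝ => gaussianPDFReal 0 v (p.1 - ρ * p.2) * w p.2)
      ((volume : Measure ℝ).prod (volume : Measure ℝ)) := by
  have hjm : Measurable (fun p : ℝ × ℝ => gaussianPDFReal 0 v (p.1 - ρ * p.2) * w p.2) :=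
    ((measurable_gaussianPDFReal 0 v).comp
      (measurable_fst.sub (measurable_snd.const_mul ρ))).mul (hwm.comp measurable_snd)
  rw [integrable_prod_iff' hjm.aestronglyMeasurable]
  constructor
  · apply ae_of_all
    intro u
    exact ((integrable_gaussianPDFReal 0 v).comp_sub_right (ρ * u)).mul_const (w u)
  · have he : (fun u => ∫ x, ‖gaussianPDFReal 0 v (x - ρ * u) * w u‖) = w := by
      funext u
      have : ∀ x : ℝ, ‖gaussianPDFReal 0 v (x - ρ * u) * w u‖
          = gaussianPDFReal 0 v (x - ρ * u) * w u := by
        intro x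
        rw [Real.norm_eq_abs, abs_of_nonneg (mul_nonneg (gaussianPDFReal_nonneg _ _ _) (hw0 u))]
      simp_rw [this]
      rw [integral_mul_const, integral_sub_right_eq_self (gaussianPDFReal 0 v) (ρ * u),
        integral_gaussianPDFReal_eq_one 0 hv, one_mul]
    rw [he]
    exact hwi

/-- For the discretized channel power `Γ_k = g_k + S_k + M_k` (path loss
plus AR(1) Gaussian shadowing plus i.i.d. multipath with continuous CDF `F`), the
probability that connectivity fails at all of the first `N+1` steps is given by the
recursively defined functions `J_k`:
`P(Γ_k < c for all k ≤ N) = ∫ J_N(x) dx`. -/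
theorem stmt_16
    {Ω : Type*} [MeasurableSpace Ω] (P : Measure Ω) [IsProbabilityMeasure P]
    -- i.i.d. standard Gaussian shadowing innovations and i.i.d. multipath values,
    -- with the two families mutually independent
    (Z : ℕ → Ω → ℝ) (M : ℕ → Ω → ℝ)
    (hZmeas : ∀ k, Measurable (Z k)) (hMmeas : ∀ k, Measurable (M k))
    (hindep : iIndepFun (Sum.elim Z M : ℕ ⊕ ℕ → Ω → ℝ) P)
    (hZlaw : ∀ k, Measure.map (Z k) P = gaussianReal 0 1)
    (ν : Measure ℝ) [IsProbabilityMeasure ν]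
    (hMlaw : ∀ k, Measure.map (M k) P = ν)
    -- the (continuous) CDF of the multipath law
    (F : ℝ → ℝ) (hF : ∀ t, F t = (ν (Set.Iic t)).toReal) (hFcont : Continuous F)
    -- parameters
    (σSH βSH Δd : ℝ) (hσ : 0 < σSH) (hβ : 0 < βSH) (hΔd : 0 < Δd)
    (ρ : ℝ) (hρ : ρ = Real.exp (-Δd / βSH))
    (g : ℕ → ℝ) (c : ℝ)
    -- the AR(1) shadowing process
    (S : ℕ → Ω → ℝ)
    (hS0 : ∀ ω, S 0 ω = σSH * Z 0 ω)
    (hSsucc : ∀ k ω, S (k + 1) ω =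
      ρ * S k ω + σSH * Real.sqrt (1 - ρ ^ 2) * Z (k + 1) ω)
    -- the channel power process
    (Γ : ℕ → Ω → ℝ)
    (hΓ : ∀ k ω, Γ k ω = g k + S k ω + M k ω)
    -- the centered Gaussian density with variance `v`
    (φ : ℝ → ℝ → ℝ)
    (hφ : ∀ v t, φ v t = (Real.sqrt (2 * π * v))⁻¹ * Real.exp (-t ^ 2 / (2 * v)))
    -- the recursively defined functions `J_k`
    (J : ℕ → ℝ → ℝ)
    (hJ0 : ∀ x, J 0 x = F (c - g 0 - x) * φ (σSH ^ 2) x)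
    (hJsucc : ∀ k x, J (k + 1) x =
      F (c - g (k + 1) - x) *
        ∫ u, φ (σSH ^ 2 * (1 - ρ ^ 2)) (x - ρ * u) * J k u) :
    ∀ N : ℕ,
      (P {ω | ∀ k ≤ N, Γ k ω < c}).toReal = ∫ x, J N x := by
  classical
  -- basic parameter facts
  have hρ0 : 0 < ρ := hρ ▸ Real.exp_pos _
  have hρ1 : ρ < 1 := by
    rw [hρ]
    calc Real.exp (-Δd / βSH) < Real.exp 0 := by
          apply Real.exp_lt_exp.mpr
          apply div_neg_of_neg_of_pos (by linarith) hβ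
      _ = 1 := Real.exp_zero
  have h1ρ : 0 < 1 - ρ ^ 2 := by nlinarith
  set τ : ℝ := σSH * Real.sqrt (1 - ρ ^ 2) with hτ
  have hτ0 : 0 < τ := mul_pos hσ (Real.sqrt_pos.mpr h1ρ)
  have hτsq : τ ^ 2 = σSH ^ 2 * (1 - ρ ^ 2) := by
    rw [hτ, mul_pow, Real.sq_sqrt h1ρ.le]
  set v0 : ℝ≥0 := ⟨σSH ^ 2, sq_nonneg _⟩ with hv0
  set v1 : ℝ≥0 := ⟨σSH ^ 2 * (1 - ρ ^ 2), by positivity⟩ with hv1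
  have hv0ne : v0 ≠ 0 := by
    rw [← NNReal.coe_ne_zero]
    show (σSH ^ 2 : ℝ) ≠ 0
    positivity
  have hv1ne : v1 ≠ 0 := by
    rw [← NNReal.coe_ne_zero]
    show (σSH ^ 2 * (1 - ρ ^ 2) : ℝ) ≠ 0
    positivity
  have hc0 : ((v0 : ℝ≥0) : ℝ) = σSH ^ 2 := rfl
  have hc1 : ((v1 : ℝ≥0) : ℝ) = σSH ^ 2 * (1 - ρ ^ 2) := rfl
  have hφ0 : ∀ t, φ (σSH ^ 2) t = gaussianPDFReal 0 v0 t := by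
    intro t
    rw [hφ, gaussianPDFReal]
    rw [hc0, sub_zero]
  have hφ1 : ∀ t, φ (σSH ^ 2 * (1 - ρ ^ 2)) t = gaussianPDFReal 0 v1 t := by
    intro t
    rw [hφ, gaussianPDFReal]
    rw [hc1, sub_zero]
  -- measurability of the processes
  have hSmeas : ∀ k, Measurable (S k) := by
    intro k
    induction k with
    | zero =>
        have e : S 0 = fun ω => σSH * Z 0 ω := funext hS0
        rw [e]; exact (hZmeas 0).const_mul σSH
    | succ k ih =>
        have e : S (k+1) = fun ω => ρ * S k ω + τ * Z (k+1) ω := funext (hSsucc k)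
        rw [e]; exact (ih.const_mul ρ).add ((hZmeas (k+1)).const_mul τ)
  have hΓmeas : ∀ k, Measurable (Γ k) := by
    intro k
    have e : Γ k = fun ω => g k + S k ω + M k ω := funext (hΓ k)
    rw [e]; exact ((measurable_const.add (hSmeas k)).add (hMmeas k))
  have hmeasSum : ∀ i : ℕ ⊕ ℕ, Measurable (Sum.elim Z M i) := by
    rintro (i | i)
    exacts [hZmeas i, hMmeas i]
  have hSf : ∀ k ω, S k ω = sfun σSH ρ τ k (fun n => Z n ω) := by
    intro k
    induction k with
    | zero => intro ω; rw [hS0]; rfl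
    | succ k ih => intro ω; rw [hSsucc, ih ω]; rfl
  -- facts about F and ν
  have hFm : Measurable F := hFcont.measurable
  have hF0 : ∀ t, 0 ≤ F t := fun t => (hF t) ▸ ENNReal.toReal_nonneg
  have hF1 : ∀ t, F t ≤ 1 := by
    intro t
    rw [hF]
    have h1 : ν (Set.Iic t) ≤ 1 := prob_le_one
    calc (ν (Set.Iic t)).toReal ≤ (1 : ℝ≥0∞).toReal :=
          ENNReal.toReal_mono ENNReal.one_ne_top h1
      _ = 1 := by simp
  have hνIio : ∀ t : ℝ, ν (Set.Iio t) = ν (Set.Iic t) := by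
    intro t
    refine le_antisymm (measure_mono Set.Iio_subset_Iic_self) ?_
    have hmono : Monotone (fun n : ℕ => Set.Iic (t - 1 / ((n : ℝ) + 1))) := by
      intro a b hab
      apply Set.Iic_subset_Iic.mpr
      have hab' : (a : ℝ) + 1 ≤ (b : ℝ) + 1 := by
        have := (Nat.cast_le (α := ℝ)).mpr hab; linarith
      have : (1:ℝ)/((b:ℝ)+1) ≤ 1/((a:ℝ)+1) :=
        one_div_le_one_div_of_le (by positivity) hab'
      linarith
    have hUnion : (⋃ n : ℕ, Set.Iic (t - 1 / ((n : ℝ) + 1))) = Set.Iio t := by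
      ext x
      simp only [Set.mem_iUnion, Set.mem_Iic, Set.mem_Iio]
      constructor
      · rintro ⟨n, hn⟩
        have : (0:ℝ) < 1 / ((n:ℝ)+1) := by positivity
        linarith
      · intro hx
        obtain ⟨n, hn⟩ := exists_nat_one_div_lt (sub_pos.mpr hx)
        exact ⟨n, by linarith⟩
    have h1 : Filter.Tendsto (fun n : ℕ => ν (Set.Iic (t - 1 / ((n : ℝ) + 1))))
        Filter.atTop (nhds (ν (Set.Iio t))) := by
      rw [← hUnion]
      exact tendsto_measure_iUnion_atTop hmono
    have h2 : Filter.Tendsto (fun n : ℕ => ν (Set.Iic (t - 1 / ((n : ℝ) + 1))))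
        Filter.atTop (nhds (ν (Set.Iic t))) := by
      have he : ∀ s : ℝ, ν (Set.Iic s) = ENNReal.ofReal (F s) := by
        intro s
        rw [hF, ENNReal.ofReal_toReal (measure_ne_top ν _)]
      simp_rw [he]
      have h3 : Filter.Tendsto (fun n : ℕ => t - 1 / ((n : ℝ) + 1)) Filter.atTop (nhds t) := by
        have h4 : Filter.Tendsto (fun n : ℕ => 1 / ((n : ℝ) + 1)) Filter.atTop (nhds 0) :=
          tendsto_one_div_add_atTop_nhds_zero_nat
        simpa using tendsto_const_nhds.sub h4
      exact (ENNReal.continuous_ofReal.tendsto _).comp ((hFcont.tendsto t).comp h3)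
    exact le_of_eq (tendsto_nhds_unique h1 h2).symm
  have hIint : ∀ t : ℝ, ∫ m, indLT m t ∂ν = F t := by
    intro t
    simp_rw [indLT_apply]
    rw [integral_indicator_const (1:ℝ) measurableSet_Iio, smul_eq_mul, mul_one, measureReal_def, hνIio, hF]
  -- properties of J
  have hJprop : ∀ N, Measurable (J N) ∧ (∀ x, 0 ≤ J N x) ∧ Integrable (J N) volume := by
    intro N
    induction N with
    | zero =>
        have e : J 0 = fun x => F (c - g 0 - x) * gaussianPDFReal 0 v0 x := by
          funext x; rw [hJ0, hφ0]
        have hm : Measurable (J 0) := by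
          rw [e]
          exact (hFm.comp (measurable_const.sub measurable_id)).mul
            (measurable_gaussianPDFReal 0 v0)
        refine ⟨hm, ?_, ?_⟩
        · intro x
          rw [e]
          exact mul_nonneg (hF0 _) (gaussianPDFReal_nonneg _ _ _)
        · apply Integrable.mono' (integrable_gaussianPDFReal 0 v0) hm.aestronglyMeasurable
          apply ae_of_all
          intro x
          rw [e, Real.norm_eq_abs, abs_of_nonneg (mul_nonneg (hF0 _) (gaussianPDFReal_nonneg _ _ _))]
          calc F (c - g 0 - x) * gaussianPDFReal 0 v0 x
              ≤ 1 * gaussianPDFReal 0 v0 x :=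
                mul_le_mul_of_nonneg_right (hF1 _) (gaussianPDFReal_nonneg _ _ _)
            _ = gaussianPDFReal 0 v0 x := one_mul _
    | succ N ih =>
        obtain ⟨hm, hnn, hint⟩ := ih
        have hconv := conv_integrable hv1ne ρ hm hnn hint
        set K : ℝ → ℝ := fun x => ∫ u, gaussianPDFReal 0 v1 (x - ρ * u) * J N u with hK
        have hKm : Measurable K := by
          have hsm : StronglyMeasurable
              (fun p : ℝ × ℝ => gaussianPDFReal 0 v1 (p.1 - ρ * p.2) * J N p.2) :=
            (((measurable_gaussianPDFReal 0 v1).comp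
              (measurable_fst.sub (measurable_snd.const_mul ρ))).mul
              (hm.comp measurable_snd)).stronglyMeasurable
          exact hsm.integral_prod_right'.measurable
        have hKnn : ∀ x, 0 ≤ K x := by
          intro x
          apply integral_nonneg
          intro u
          exact mul_nonneg (gaussianPDFReal_nonneg _ _ _) (hnn u)
        have hKint : Integrable K volume := hconv.integral_prod_left
        have e : J (N+1) = fun x => F (c - g (N+1) - x) * K x := by
          funext x
          rw [hJsucc]
          congr 1
          apply integral_congr_ae (ae_of_all _ _)
          intro u
          rw [hφ1]
        have hm' : Measurable (J (N+1)) := by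
          rw [e]
          exact (hFm.comp (measurable_const.sub measurable_id)).mul hKm
        refine ⟨hm', ?_, ?_⟩
        · intro x
          rw [e]
          exact mul_nonneg (hF0 _) (hKnn x)
        · apply Integrable.mono' hKint hm'.aestronglyMeasurable
          apply ae_of_all
          intro x
          rw [e, Real.norm_eq_abs, abs_of_nonneg (mul_nonneg (hF0 _) (hKnn x))]
          calc F (c - g (N+1) - x) * K x ≤ 1 * K x :=
                mul_le_mul_of_nonneg_right (hF1 _) (hKnn x)
            _ = K x := one_mul _
  -- the key induction
  have key : ∀ N : ℕ, ∀ h : ℝ → ℝ, Measurable h → (∀ x, |h x| ≤ 1) →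
      ∫ ω, (∏ k ∈ Finset.range (N+1), indLT (M k ω) (c - g k - S k ω)) * h (S N ω) ∂P
        = ∫ x, J N x * h x := by
    intro N
    induction N with
    | zero =>
        intro h hh hb
        have hZM : IndepFun (Z 0) (M 0) P :=
          hindep.indepFun (i := Sum.inl 0) (j := Sum.inr 0) (by simp)
        have e0 : S 0 = (fun x => σSH * x) ∘ Z 0 := funext hS0
        have hS0M : IndepFun (S 0) (M 0) P := by
          rw [e0]
          exact hZM.comp (measurable_id.const_mul σSH) measurable_id
        have hlawS0 : Measure.map (S 0) P = gaussianReal 0 v0 := by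
          rw [e0, ← Measure.map_map (show Measurable fun x : ℝ => σSH * x from measurable_id.const_mul σSH) (hZmeas 0), hZlaw 0]
          rw [show (fun x : ℝ => σSH * x) = (σSH * ·) from rfl, gaussianReal_map_const_mul]
          congr 1
          · ring
          · rw [mul_one]; rfl
        have hmap : Measure.map (fun ω => (S 0 ω, M 0 ω)) P = (gaussianReal 0 v0).prod ν := by
          rw [← hlawS0, ← hMlaw 0]
          exact (indepFun_iff_map_prod_eq_prod_map_map (hSmeas 0).aemeasurable
            (hMmeas 0).aemeasurable).mp hS0M
        set Ψ : ℝ × ℝ → ℝ := fun p => indLT p.2 (c - g 0 - p.1) * h p.1 with hΨdef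
        have hΨm : Measurable Ψ := by
          apply Measurable.mul
          · exact measurable_indLT.comp
              (measurable_snd.prodMk (measurable_const.sub measurable_fst))
          · exact hh.comp measurable_fst
        have hΨb : ∀ p, |Ψ p| ≤ 1 := by
          intro p
          simp only [hΨdef]
          calc |indLT p.2 (c - g 0 - p.1) * h p.1|
              = |indLT p.2 (c - g 0 - p.1)| * |h p.1| := abs_mul _ _
            _ ≤ 1 * 1 := mul_le_mul
                (by rw [abs_of_nonneg (indLT_nonneg _ _)]; exact indLT_le_one _ _)
                (hb _) (abs_nonneg _) zero_le_one
            _ = 1 := mul_one 1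
        calc ∫ ω, (∏ k ∈ Finset.range (0+1), indLT (M k ω) (c - g k - S k ω)) * h (S 0 ω) ∂P
            = ∫ ω, Ψ (S 0 ω, M 0 ω) ∂P := by
              apply integral_congr_ae (ae_of_all _ _)
              intro ω
              simp [hΨdef, Finset.prod_range_one]
          _ = ∫ p, Ψ p ∂((gaussianReal 0 v0).prod ν) := by
              rw [← hmap]
              exact (integral_map ((hSmeas 0).prodMk (hMmeas 0)).aemeasurable
                hΨm.aestronglyMeasurable).symm
          _ = ∫ s, ∫ m, Ψ (s, m) ∂ν ∂(gaussianReal 0 v0) :=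
              integral_prod Ψ (integrable_of_bounded'' hΨm.aestronglyMeasurable hΨb)
          _ = ∫ s, F (c - g 0 - s) * h s ∂(gaussianReal 0 v0) := by
              apply integral_congr_ae (ae_of_all _ _)
              intro s
              simp only [hΨdef]
              rw [integral_mul_const, hIint]
          _ = ∫ x, gaussianPDFReal 0 v0 x * (F (c - g 0 - x) * h x) :=
              integral_gaussianReal_pdf_mul 0 hv0ne _
          _ = ∫ x, J 0 x * h x := by
              apply integral_congr_ae (ae_of_all _ _)
              intro x
              rw [hJ0, hφ0]
              ring
    | succ N ih =>
        intro h hh hb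
        -- truncated vectors of the first N+1 innovations / multipath values
        set Zt : Ω → (ℕ → ℝ) := fun ω n => if n ≤ N then Z n ω else 0 with hZt
        set Mt : Ω → (ℕ → ℝ) := fun ω n => if n ≤ N then M n ω else 0 with hMt
        have hZtm : Measurable Zt := by
          rw [hZt]
          apply measurable_pi_lambda
          intro n
          by_cases hn : n ≤ N
          · simp only [if_pos hn]; exact hZmeas n
          · simp only [if_neg hn]; exact measurable_const
        have hMtm : Measurable Mt := by
          rw [hMt]
          apply measurable_pi_lambda
          intro n
          by_cases hn : n ≤ N
          · simp only [if_pos hn]; exact hMmeas n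
          · simp only [if_neg hn]; exact measurable_const
        -- independence of the past block from the (N+1)-st innovations
        set T1 : Finset (ℕ ⊕ ℕ) :=
          (Finset.range (N+1)).image Sum.inl ∪ (Finset.range (N+1)).image Sum.inr with hT1
        have hmemT1l : ∀ n : ℕ, Sum.inl n ∈ T1 ↔ n ≤ N := by
          intro n; simp [hT1, Nat.lt_succ_iff]
        have hmemT1r : ∀ n : ℕ, Sum.inr n ∈ T1 ↔ n ≤ N := by
          intro n; simp [hT1, Nat.lt_succ_iff]
        set T2 : Finset (ℕ ⊕ ℕ) := {Sum.inl (N+1), Sum.inr (N+1)} with hT2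
        have hmem2l : Sum.inl (N+1) ∈ T2 := by simp [hT2]
        have hmem2r : Sum.inr (N+1) ∈ T2 := by simp [hT2]
        have hdisj : Disjoint T1 T2 := by
          rw [Finset.disjoint_right]
          intro a ha hb'
          simp only [hT2, Finset.mem_insert, Finset.mem_singleton] at ha
          rcases ha with ha | ha <;> subst ha
          · rw [hmemT1l] at hb'; omega
          · rw [hmemT1r] at hb'; omega
        have hblock := hindep.indepFun_finset T1 T2 hdisj hmeasSum
        set φ1 : (T1 → ℝ) → (ℕ → ℝ) × (ℕ → ℝ) := fun f =>
          (fun n => if hn : Sum.inl n ∈ T1 then f ⟨Sum.inl n, hn⟩ else 0,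
           fun n => if hn : Sum.inr n ∈ T1 then f ⟨Sum.inr n, hn⟩ else 0) with hφ1def
        have hφ1m : Measurable φ1 := by
          rw [hφ1def]
          apply Measurable.prodMk
          · apply measurable_pi_lambda
            intro n
            by_cases hn : Sum.inl n ∈ T1
            · simp only [dif_pos hn]; exact measurable_pi_apply _
            · simp only [dif_neg hn]; exact measurable_const
          · apply measurable_pi_lambda
            intro n
            by_cases hn : Sum.inr n ∈ T1
            · simp only [dif_pos hn]; exact measurable_pi_apply _
            · simp only [dif_neg hn]; exact measurable_const
        set φ2 : (T2 → ℝ) → ℝ × ℝ := fun f =>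
          (f ⟨Sum.inl (N+1), hmem2l⟩, f ⟨Sum.inr (N+1), hmem2r⟩) with hφ2def
        have hφ2m : Measurable φ2 := by
          rw [hφ2def]
          exact (measurable_pi_apply _).prodMk (measurable_pi_apply _)
        have hVeq : (fun ω => (Zt ω, Mt ω)) = φ1 ∘ (fun a (i : T1) => Sum.elim Z M i a) := by
          funext ω
          simp only [Function.comp_apply, hφ1def, hZt, hMt]
          refine Prod.ext ?_ ?_
          · funext n
            by_cases hn : n ≤ N
            · simp [if_pos hn, dif_pos ((hmemT1l n).mpr hn)]
            · simp [if_neg hn, dif_neg (fun hmem => hn ((hmemT1l n).mp hmem))]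
          · funext n
            by_cases hn : n ≤ N
            · simp [if_pos hn, dif_pos ((hmemT1r n).mpr hn)]
            · simp [if_neg hn, dif_neg (fun hmem => hn ((hmemT1r n).mp hmem))]
        have hUeq : (fun ω => (Z (N+1) ω, M (N+1) ω))
            = φ2 ∘ (fun a (i : T2) => Sum.elim Z M i a) := by
          funext ω; rfl
        have hVm : Measurable fun ω => (Zt ω, Mt ω) := hZtm.prodMk hMtm
        have hUm : Measurable fun ω => (Z (N+1) ω, M (N+1) ω) :=
          (hZmeas _).prodMk (hMmeas _)
        have hVU : IndepFun (fun ω => (Zt ω, Mt ω)) (fun ω => (Z (N+1) ω, M (N+1) ω)) P := by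
          rw [hVeq, hUeq]
          exact hblock.comp hφ1m hφ2m
        have hUlaw : Measure.map (fun ω => (Z (N+1) ω, M (N+1) ω)) P
            = (gaussianReal 0 1).prod ν := by
          rw [← hZlaw (N+1), ← hMlaw (N+1)]
          exact (indepFun_iff_map_prod_eq_prod_map_map (hZmeas _).aemeasurable
            (hMmeas _).aemeasurable).mp
            (hindep.indepFun (i := Sum.inl (N+1)) (j := Sum.inr (N+1)) (by simp))
        haveI : IsProbabilityMeasure (Measure.map (fun ω => (Zt ω, Mt ω)) P) :=
          Measure.isProbabilityMeasure_map hVm.aemeasurable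
        have hVUlaw : Measure.map (fun ω => ((Zt ω, Mt ω), (Z (N+1) ω, M (N+1) ω))) P
            = (Measure.map (fun ω => (Zt ω, Mt ω)) P).prod ((gaussianReal 0 1).prod ν) := by
          rw [← hUlaw]
          exact (indepFun_iff_map_prod_eq_prod_map_map hVm.aemeasurable
            hUm.aemeasurable).mp hVU
        -- the one-step integral kernel
        set q0 : ℝ → ℝ := fun x => F (c - g (N+1) - x) * h x with hq0def
        have hq0m : Measurable q0 := by
          rw [hq0def]
          exact (hFm.comp (measurable_const.sub measurable_id)).mul hh
        have hq0b : ∀ x, |q0 x| ≤ 1 := by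
          intro x
          simp only [hq0def]
          calc |F (c - g (N+1) - x) * h x| = |F (c - g (N+1) - x)| * |h x| := abs_mul _ _
            _ ≤ 1 * 1 := mul_le_mul (by rw [abs_of_nonneg (hF0 _)]; exact hF1 _) (hb _)
                (abs_nonneg _) zero_le_one
            _ = 1 := mul_one 1
        set Φ : ℝ → ℝ := fun s => ∫ x, gaussianPDFReal 0 v1 (x - ρ * s) * q0 x with hΦdef
        have hΦm : Measurable Φ := by
          rw [hΦdef]
          have hsm : StronglyMeasurable
              (fun p : ℝ × ℝ => gaussianPDFReal 0 v1 (p.2 - ρ * p.1) * q0 p.2) :=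
            (((measurable_gaussianPDFReal 0 v1).comp
              (measurable_snd.sub (measurable_fst.const_mul ρ))).mul
              (hq0m.comp measurable_snd)).stronglyMeasurable
          exact hsm.integral_prod_right'.measurable
        have hpdfint : ∀ s : ℝ, Integrable (fun x => gaussianPDFReal 0 v1 (x - ρ * s)) volume :=
          fun s => (integrable_gaussianPDFReal 0 v1).comp_sub_right (ρ * s)
        have hΦb : ∀ s, |Φ s| ≤ 1 := by
          intro s
          have h1 : |Φ s| ≤ ∫ x, gaussianPDFReal 0 v1 (x - ρ * s) := by
            simp only [hΦdef]
            calc |∫ x, gaussianPDFReal 0 v1 (x - ρ * s) * q0 x|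
                ≤ ∫ x, |gaussianPDFReal 0 v1 (x - ρ * s) * q0 x| := by
                  have hn := norm_integral_le_integral_norm (μ := (volume : Measure ℝ))
                    (fun x => gaussianPDFReal 0 v1 (x - ρ * s) * q0 x)
                  simpa only [Real.norm_eq_abs] using hn
              _ ≤ ∫ x, gaussianPDFReal 0 v1 (x - ρ * s) := by
                  apply integral_mono_of_nonneg (ae_of_all _ fun x => abs_nonneg _) (hpdfint s)
                  apply ae_of_all
                  intro x
                  show |gaussianPDFReal 0 v1 (x - ρ * s) * q0 x| ≤ gaussianPDFReal 0 v1 (x - ρ * s)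
                  rw [abs_mul, abs_of_nonneg (gaussianPDFReal_nonneg _ _ _)]
                  calc gaussianPDFReal 0 v1 (x - ρ * s) * |q0 x|
                      ≤ gaussianPDFReal 0 v1 (x - ρ * s) * 1 :=
                        mul_le_mul_of_nonneg_left (hq0b x) (gaussianPDFReal_nonneg _ _ _)
                    _ = gaussianPDFReal 0 v1 (x - ρ * s) := mul_one _
          rwa [integral_sub_right_eq_self (gaussianPDFReal 0 v1) (ρ * s),
            integral_gaussianPDFReal_eq_one 0 hv1ne] at h1
        have hZtS : ∀ (k : ℕ), k ≤ N → ∀ ω, sfun σSH ρ τ k (Zt ω) = S k ω := by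
          intro k hk ω
          rw [hSf k ω]
          apply sfun_congr
          intro i hi
          simp only [hZt]
          rw [if_pos (hi.trans hk)]
        set A : (ℕ → ℝ) × (ℕ → ℝ) → ℝ := fun p =>
          ∏ k ∈ Finset.range (N+1), indLT (p.2 k) (c - g k - sfun σSH ρ τ k p.1) with hAdef
        have hAm : Measurable A := by
          rw [hAdef]
          apply Finset.measurable_prod
          intro k _
          have h1 : Measurable fun p : (ℕ → ℝ) × (ℕ → ℝ) =>
              (p.2 k, c - g k - sfun σSH ρ τ k p.1) :=
            ((measurable_pi_apply k).comp measurable_snd).prodMk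
              (measurable_const.sub ((sfun_measurable σSH ρ τ k).comp measurable_fst))
          exact measurable_indLT.comp h1
        have hA0 : ∀ p, 0 ≤ A p := by
          intro p; simp only [hAdef]
          exact Finset.prod_nonneg fun k _ => indLT_nonneg _ _
        have hA1 : ∀ p, A p ≤ 1 := by
          intro p; simp only [hAdef]
          exact Finset.prod_le_one (fun k _ => indLT_nonneg _ _) (fun k _ => indLT_le_one _ _)
        set E : ((ℕ → ℝ) × (ℕ → ℝ)) × (ℝ × ℝ) → ℝ :=
          fun q => ρ * sfun σSH ρ τ N q.1.1 + τ * q.2.1 with hEdef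
        have hEm : Measurable E := by
          rw [hEdef]
          exact (((sfun_measurable σSH ρ τ N).comp
            (measurable_fst.comp measurable_fst)).const_mul ρ).add
            ((measurable_fst.comp measurable_snd).const_mul τ)
        set Ψ : ((ℕ → ℝ) × (ℕ → ℝ)) × (ℝ × ℝ) → ℝ := fun q =>
          A q.1 * (indLT q.2.2 (c - g (N+1) - E q) * h (E q)) with hΨdef
        have hΨm : Measurable Ψ := by
          rw [hΨdef]
          exact (hAm.comp measurable_fst).mul
            ((measurable_indLT.comp ((measurable_snd.comp measurable_snd).prodMk
              (measurable_const.sub hEm))).mul (hh.comp hEm))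
        have hΨb : ∀ q, |Ψ q| ≤ 1 := by
          intro q
          simp only [hΨdef]
          rw [abs_mul, abs_mul]
          calc |A q.1| * (|indLT q.2.2 (c - g (N+1) - E q)| * |h (E q)|)
              ≤ 1 * (1 * 1) := by
                apply mul_le_mul
                · rw [abs_of_nonneg (hA0 _)]; exact hA1 _
                · apply mul_le_mul
                  · rw [abs_of_nonneg (indLT_nonneg _ _)]; exact indLT_le_one _ _
                  · exact hb _
                  · exact abs_nonneg _
                  · exact zero_le_one
                · positivity
                · norm_num
            _ = 1 := by norm_num
        have haff : ∀ s : ℝ,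
            Measure.map (fun z : ℝ => ρ * s + τ * z) (gaussianReal 0 1)
              = gaussianReal (ρ * s) v1 := by
          intro s
          have e : (fun z : ℝ => ρ * s + τ * z) = (fun y => y + ρ * s) ∘ (fun z => τ * z) := by
            funext z
            simp [add_comm]
          rw [e, ← Measure.map_map (show Measurable fun y : ℝ => y + ρ * s from
            measurable_id.add_const _) (show Measurable fun z : ℝ => τ * z from
            measurable_id.const_mul τ)]
          rw [show (fun z : ℝ => τ * z) = (τ * ·) from rfl, gaussianReal_map_const_mul]
          rw [show (fun y : ℝ => y + ρ * s) = (· + ρ * s) from rfl, gaussianReal_map_add_const]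
          congr 1
          · ring
          · rw [mul_one]
            exact NNReal.coe_injective (hτsq.trans hc1.symm)
        have hpdfshift : ∀ (s x : ℝ),
            gaussianPDFReal (ρ * s) v1 x = gaussianPDFReal 0 v1 (x - ρ * s) := by
          intro s x
          rw [gaussianPDFReal_sub x (ρ * s), zero_add]
        have hinner : ∀ p : (ℕ → ℝ) × (ℕ → ℝ),
            ∫ r, Ψ (p, r) ∂((gaussianReal 0 1).prod ν)
              = A p * Φ (sfun σSH ρ τ N p.1) := by
          intro p
          have hΨp : ∀ r : ℝ × ℝ, Ψ (p, r)
              = A p * (indLT r.2 (c - g (N+1) - (ρ * sfun σSH ρ τ N p.1 + τ * r.1))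
                * h (ρ * sfun σSH ρ τ N p.1 + τ * r.1)) := fun r => rfl
          simp_rw [hΨp]
          rw [integral_const_mul]
          congr 1
          have hintg : Integrable (fun r : ℝ × ℝ =>
              indLT r.2 (c - g (N+1) - (ρ * sfun σSH ρ τ N p.1 + τ * r.1))
                * h (ρ * sfun σSH ρ τ N p.1 + τ * r.1))
              ((gaussianReal 0 1).prod ν) := by
            apply integrable_of_bounded''
            · apply Measurable.aestronglyMeasurable
              exact (measurable_indLT.comp (measurable_snd.prodMk
                (measurable_const.sub ((measurable_fst.const_mul τ).const_add
                  (ρ * sfun σSH ρ τ N p.1))))).mul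
                (hh.comp ((measurable_fst.const_mul τ).const_add (ρ * sfun σSH ρ τ N p.1)))
            · intro r
              calc |indLT r.2 (c - g (N+1) - (ρ * sfun σSH ρ τ N p.1 + τ * r.1))
                    * h (ρ * sfun σSH ρ τ N p.1 + τ * r.1)|
                  = |indLT r.2 (c - g (N+1) - (ρ * sfun σSH ρ τ N p.1 + τ * r.1))|
                    * |h (ρ * sfun σSH ρ τ N p.1 + τ * r.1)| := abs_mul _ _
                _ ≤ 1 * 1 := mul_le_mul
                    (by rw [abs_of_nonneg (indLT_nonneg _ _)]; exact indLT_le_one _ _)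
                    (hb _) (abs_nonneg _) zero_le_one
                _ = 1 := mul_one 1
          rw [integral_prod _ hintg]
          have hin2 : ∀ z : ℝ,
              (∫ m, indLT m (c - g (N+1) - (ρ * sfun σSH ρ τ N p.1 + τ * z))
                * h (ρ * sfun σSH ρ τ N p.1 + τ * z) ∂ν)
              = q0 (ρ * sfun σSH ρ τ N p.1 + τ * z) := by
            intro z
            rw [integral_mul_const, hIint]
          simp_rw [hin2]
          have hcomp : ∫ z, q0 (ρ * sfun σSH ρ τ N p.1 + τ * z) ∂(gaussianReal 0 1)
              = ∫ x, q0 x ∂(gaussianReal (ρ * sfun σSH ρ τ N p.1) v1) := by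
            rw [← haff (sfun σSH ρ τ N p.1)]
            exact (integral_map (show Measurable fun z : ℝ =>
              ρ * sfun σSH ρ τ N p.1 + τ * z from
              (measurable_id.const_mul τ).const_add _).aemeasurable
              hq0m.aestronglyMeasurable).symm
          rw [hcomp, integral_gaussianReal_pdf_mul _ hv1ne]
          simp only [hΦdef]
          apply integral_congr_ae (ae_of_all _ _)
          intro x
          rw [hpdfshift]
        -- the chain of equalities
        calc ∫ ω, (∏ k ∈ Finset.range (N+1+1), indLT (M k ω) (c - g k - S k ω))
              * h (S (N+1) ω) ∂P
            = ∫ ω, Ψ ((Zt ω, Mt ω), (Z (N+1) ω, M (N+1) ω)) ∂P := by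
              apply integral_congr_ae (ae_of_all _ _)
              intro ω
              have e1 : ∀ k ∈ Finset.range (N+1),
                  indLT (Mt ω k) (c - g k - sfun σSH ρ τ k (Zt ω))
                    = indLT (M k ω) (c - g k - S k ω) := by
                intro k hk
                rw [Finset.mem_range, Nat.lt_succ_iff] at hk
                rw [hZtS k hk ω]
                congr 1
                simp only [hMt]
                rw [if_pos hk]
              have e2 : ρ * sfun σSH ρ τ N (Zt ω) + τ * Z (N+1) ω = S (N+1) ω := by
                rw [hZtS N le_rfl ω, ← hSsucc]
              simp only [hΨdef, hAdef, hEdef]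
              rw [Finset.prod_congr rfl e1, e2, Finset.prod_range_succ]
              ring
          _ = ∫ q, Ψ q ∂((Measure.map (fun ω => (Zt ω, Mt ω)) P).prod
                ((gaussianReal 0 1).prod ν)) := by
              rw [← hVUlaw]
              exact (integral_map (hVm.prodMk hUm).aemeasurable
                hΨm.aestronglyMeasurable).symm
          _ = ∫ p, ∫ r, Ψ (p, r) ∂((gaussianReal 0 1).prod ν)
                ∂(Measure.map (fun ω => (Zt ω, Mt ω)) P) :=
              integral_prod Ψ (integrable_of_bounded'' hΨm.aestronglyMeasurable hΨb)
          _ = ∫ p, A p * Φ (sfun σSH ρ τ N p.1)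
                ∂(Measure.map (fun ω => (Zt ω, Mt ω)) P) := by
              apply integral_congr_ae (ae_of_all _ _)
              exact hinner
          _ = ∫ ω, A (Zt ω, Mt ω) * Φ (sfun σSH ρ τ N (Zt ω)) ∂P := by
              rw [integral_map hVm.aemeasurable (show AEStronglyMeasurable
                (fun p : (ℕ → ℝ) × (ℕ → ℝ) => A p * Φ (sfun σSH ρ τ N p.1))
                (Measure.map (fun ω => (Zt ω, Mt ω)) P) from
                (hAm.mul (hΦm.comp ((sfun_measurable σSH ρ τ N).comp
                  measurable_fst))).aestronglyMeasurable)]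
          _ = ∫ ω, (∏ k ∈ Finset.range (N+1), indLT (M k ω) (c - g k - S k ω))
                * Φ (S N ω) ∂P := by
              apply integral_congr_ae (ae_of_all _ _)
              intro ω
              have e1 : ∀ k ∈ Finset.range (N+1),
                  indLT (Mt ω k) (c - g k - sfun σSH ρ τ k (Zt ω))
                    = indLT (M k ω) (c - g k - S k ω) := by
                intro k hk
                rw [Finset.mem_range, Nat.lt_succ_iff] at hk
                rw [hZtS k hk ω]
                congr 1
                simp only [hMt]
                rw [if_pos hk]
              simp only [hAdef]
              rw [Finset.prod_congr rfl e1, hZtS N le_rfl ω]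
          _ = ∫ x, J N x * Φ x := ih Φ hΦm hΦb
          _ = ∫ x, J (N+1) x * h x := by
              obtain ⟨hJm, hJnn, hJint⟩ := hJprop N
              have hconv := conv_integrable hv1ne ρ hJm hJnn hJint
              set G : ℝ × ℝ → ℝ := fun p =>
                gaussianPDFReal 0 v1 (p.1 - ρ * p.2) * (J N p.2 * q0 p.1) with hGdef
              have hGm : Measurable G := by
                rw [hGdef]
                exact ((measurable_gaussianPDFReal 0 v1).comp
                  (measurable_fst.sub (measurable_snd.const_mul ρ))).mul
                  ((hJm.comp measurable_snd).mul (hq0m.comp measurable_fst))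
              have hGint : Integrable G ((volume : Measure ℝ).prod volume) := by
                apply Integrable.mono' hconv hGm.aestronglyMeasurable
                apply ae_of_all
                intro p
                simp only [hGdef]
                rw [Real.norm_eq_abs, abs_mul, abs_mul,
                  abs_of_nonneg (gaussianPDFReal_nonneg _ _ _), abs_of_nonneg (hJnn _)]
                calc gaussianPDFReal 0 v1 (p.1 - ρ * p.2) * (J N p.2 * |q0 p.1|)
                    ≤ gaussianPDFReal 0 v1 (p.1 - ρ * p.2) * (J N p.2 * 1) := by
                      apply mul_le_mul_of_nonneg_left _ (gaussianPDFReal_nonneg _ _ _)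
                      exact mul_le_mul_of_nonneg_left (hq0b _) (hJnn _)
                  _ = gaussianPDFReal 0 v1 (p.1 - ρ * p.2) * J N p.2 := by rw [mul_one]
              calc ∫ x, J N x * Φ x
                  = ∫ u, ∫ x, G (x, u) := by
                    apply integral_congr_ae (ae_of_all _ _)
                    intro u
                    simp only [hΦdef, hGdef]
                    rw [← integral_const_mul]
                    apply integral_congr_ae (ae_of_all _ _)
                    intro x
                    ring
                _ = ∫ x, ∫ u, G (x, u) := by
                    rw [← integral_prod_symm G hGint, integral_prod G hGint]
                _ = ∫ x, J (N+1) x * h x := by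
                    apply integral_congr_ae (ae_of_all _ _)
                    intro x
                    rw [hJsucc]
                    have e4 : ∫ u, φ (σSH ^ 2 * (1 - ρ ^ 2)) (x - ρ * u) * J N u
                        = ∫ u, gaussianPDFReal 0 v1 (x - ρ * u) * J N u := by
                      apply integral_congr_ae (ae_of_all _ _)
                      intro u
                      rw [hφ1]
                    rw [e4]
                    simp only [hGdef]
                    have e3 : ∀ u : ℝ, gaussianPDFReal 0 v1 (x - ρ * u) * (J N u * q0 x)
                        = gaussianPDFReal 0 v1 (x - ρ * u) * J N u * q0 x := fun u => by ring
                    simp_rw [e3]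
                    rw [integral_mul_const]
                    simp only [hq0def]
                    ring
  -- conclude
  intro N
  have hEmeas : MeasurableSet {ω | ∀ k ≤ N, Γ k ω < c} := by
    have e : {ω | ∀ k ≤ N, Γ k ω < c} = ⋂ (k : ℕ), ⋂ (_ : k ≤ N), {ω | Γ k ω < c} := by
      ext ω; simp
    rw [e]
    exact MeasurableSet.iInter fun k => MeasurableSet.iInter fun _ =>
      measurableSet_lt (hΓmeas k) measurable_const
  have hind : ∀ ω, ({ω | ∀ k ≤ N, Γ k ω < c}).indicator (fun _ => (1:ℝ)) ω
      = ∏ k ∈ Finset.range (N+1), indLT (M k ω) (c - g k - S k ω) := by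
    intro ω
    by_cases hω : ∀ k ≤ N, Γ k ω < c
    · rw [Set.indicator_of_mem (show ω ∈ {ω | ∀ k ≤ N, Γ k ω < c} from hω)]
      rw [eq_comm]
      apply Finset.prod_eq_one
      intro k hk
      rw [Finset.mem_range, Nat.lt_succ_iff] at hk
      have h2 := hω k hk
      rw [hΓ] at h2
      rw [indLT, if_pos (by linarith)]
    · rw [Set.indicator_of_notMem (show ω ∉ {ω | ∀ k ≤ N, Γ k ω < c} from hω)]
      push_neg at hω
      obtain ⟨k, hk, hge⟩ := hω
      rw [eq_comm]
      apply Finset.prod_eq_zero (Finset.mem_range.mpr (Nat.lt_succ_of_le hk))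
      rw [hΓ] at hge
      rw [indLT, if_neg (by intro h2; linarith)]
  calc (P {ω | ∀ k ≤ N, Γ k ω < c}).toReal
      = ∫ ω, ({ω | ∀ k ≤ N, Γ k ω < c}).indicator (fun _ => (1:ℝ)) ω ∂P := by
        rw [integral_indicator_const (1:ℝ) hEmeas, smul_eq_mul, mul_one, measureReal_def]
    _ = ∫ ω, (∏ k ∈ Finset.range (N+1), indLT (M k ω) (c - g k - S k ω))
          * (fun _ : ℝ => (1:ℝ)) (S N ω) ∂P := by
        apply integral_congr_ae (ae_of_all _ _)
        intro ω
        rw [hind ω]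
        simp
    _ = ∫ x, J N x * (fun _ : ℝ => (1:ℝ)) x := key N _ measurable_const (by norm_num)
    _ = ∫ x, J N x := by simp
end
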